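/- arXiv:1703.04511 — 5 statements merged into one kernel-verified Lean document; each statement's English description precedes it below -/
import Mathlib

section
/- For every positive integer m, the sum over l ≥ 0 of (1/2)^(2l+m) · C(l+m-1, l) equals 1, where C(n,k) = (n+k)!·(n-k+1)/(k!·(n+1)!) is the (n,k) entry of the Catalan triangle. -/
/-- The Catalan triangle entry `C(n,k) = (n+k)! (n-k+1) / (k! (n+1)!)`, as a real number. -/
noncomputable def catalanTriangle (n k : ℕ) : ℝ :=
  ((n + k).factorial * (n - k + 1) : ℕ) / ((k.factorial * (n + 1).factorial : ℕ) : ℝ)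


open Finset Filter Topology

/-- Partial-sum tail numerator: sum of `m` consecutive binomial coefficients. -/
def TTaux (m N : ℕ) : ℕ := ∑ i ∈ Finset.range m, (2*N+m).choose (N+i)

lemma shift_aux (n s m : ℕ) :
    ∑ i ∈ range m, n.choose (s+1+i) + n.choose s
      = ∑ i ∈ range m, n.choose (s+i) + n.choose (s+m) := by
  have h1 := Finset.sum_range_succ (fun i => n.choose (s+i)) m
  have h2 := Finset.sum_range_succ' (fun i => n.choose (s+i)) m
  have h3 : ∑ i ∈ range m, n.choose (s+(i+1)) = ∑ i ∈ range m, n.choose (s+1+i) := by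
    apply Finset.sum_congr rfl
    intro i _
    try congr 1
    try omega
  simp only [h3] at h2
  simp only [Nat.add_zero] at h2
  omega

lemma pasc_aux (n s m : ℕ) :
    ∑ i ∈ range m, (n+1).choose (s+1+i)
      = ∑ i ∈ range m, n.choose (s+i) + ∑ i ∈ range m, n.choose (s+1+i) := by
  rw [← Finset.sum_add_distrib]
  apply Finset.sum_congr rfl
  intro i _
  rw [show s+1+i = (s+i)+1 from by omega, Nat.choose_succ_succ' n (s+i)]

lemma symm_aux (m N : ℕ) :
    ∑ i ∈ range m, (2*N+m+1).choose (N+i) = ∑ i ∈ range m, (2*N+m+1).choose (N+2+i) := by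
  rw [← Finset.sum_range_reflect (fun i => (2*N+m+1).choose (N+2+i)) m]
  apply Finset.sum_congr rfl
  intro i hi
  rw [Finset.mem_range] at hi
  have h1 : N+2+(m-1-i) = 2*N+m+1 - (N+i) := by omega
  rw [h1, Nat.choose_symm (by omega)]

lemma TT_step (m N : ℕ) :
    TTaux m (N+1) + (2*N+m).choose (N+1) = 4 * TTaux m N + (2*N+m).choose (N+m+1) := by
  have norm1 : ∀ n : ℕ, ∑ i ∈ range m, n.choose (N+1+1+i) = ∑ i ∈ range m, n.choose (N+2+i) := by
    intro n
    apply Finset.sum_congr rfl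
    intro i _
    congr 1 <;> try omega
  have e1 : TTaux m (N+1) = ∑ i ∈ range m, ((2*N+m+1)+1).choose (N+1+i) := by
    apply Finset.sum_congr rfl
    intro i _
    congr 1 <;> try omega
  have e0 : TTaux m N = ∑ i ∈ range m, (2*N+m).choose (N+i) := rfl
  have h1 := pasc_aux (2*N+m+1) N m
  have h2 := pasc_aux (2*N+m) N m
  have h3 := symm_aux m N
  have h4 := pasc_aux (2*N+m) (N+1) m
  simp only [norm1] at h4
  have h5 := shift_aux (2*N+m) N m
  have h6 : (2*N+m).choose N = (2*N+m).choose (N+m) := by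
    rw [← Nat.choose_symm (show N+m ≤ 2*N+m by omega)]
    congr 1
    omega
  have h7 := shift_aux (2*N+m) (N+1) m
  simp only [norm1] at h7
  have h7'' : (2*N+m).choose (N+1+m) = (2*N+m).choose (N+m+1) := by
    congr 1
    omega
  rw [h7''] at h7
  rw [e1, e0]
  omega

lemma TT_base (m : ℕ) : TTaux m 0 + 1 = 2 ^ m := by
  have h1 : TTaux m 0 = ∑ i ∈ range m, m.choose i := by
    apply Finset.sum_congr rfl
    intro i _
    congr 1 <;> try omega
  have h2 := Nat.sum_range_choose m
  rw [Finset.sum_range_succ] at h2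
  simp only [Nat.choose_self] at h2
  omega

lemma cB_sq (n : ℕ) : n.centralBinom ^ 2 * (2*n+1) ≤ 16 ^ n := by
  induction n with
  | zero => simp [Nat.centralBinom]
  | succ n ih =>
    have key := Nat.succ_mul_centralBinom_succ n
    have key2 : ((n+1) * (n+1).centralBinom)^2 = (2*(2*n+1)*n.centralBinom)^2 := by rw [key]
    have hpos : 0 < (n+1)^2 := by positivity
    have h16 : (16:ℕ)^(n+1) = 16 * 16^n := by ring
    refine Nat.le_of_mul_le_mul_left ?_ hpos
    calc (n+1)^2 * ((n+1).centralBinom ^ 2 * (2*(n+1)+1))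
        = ((n+1) * (n+1).centralBinom)^2 * (2*n+3) := by ring
      _ = (2*(2*n+1)*n.centralBinom)^2 * (2*n+3) := by rw [key2]
      _ = (n.centralBinom^2 * (2*n+1)) * (4 * ((2*n+1)*(2*n+3))) := by ring
      _ ≤ (n.centralBinom^2 * (2*n+1)) * (4 * ((2*n+2)*(2*n+2))) := by
          apply Nat.mul_le_mul_left
          apply Nat.mul_le_mul_left
          nlinarith
      _ = (n.centralBinom^2 * (2*n+1)) * (16 * (n+1)^2) := by ring
      _ ≤ 16^n * (16 * (n+1)^2) := Nat.mul_le_mul_right _ ih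
      _ = (n+1)^2 * 16^(n+1) := by ring

lemma cB_tendsto : Tendsto (fun n : ℕ => (n.centralBinom : ℝ) / 4 ^ n) atTop (𝓝 0) := by
  set g : ℕ → ℝ := fun n => (n.centralBinom : ℝ) / 4 ^ n with hg
  have hgnn : ∀ n, 0 ≤ g n := fun n => by positivity
  have hbound : ∀ n : ℕ, (g n)^2 ≤ 1 / ((2*n+1 : ℕ) : ℝ) := by
    intro n
    have hc : ((n.centralBinom : ℝ))^2 * ((2*n+1 : ℕ) : ℝ) ≤ 16 ^ n := by
      have := cB_sq n
      calc ((n.centralBinom : ℝ))^2 * ((2*n+1 : ℕ) : ℝ)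
          = ((n.centralBinom ^ 2 * (2*n+1) : ℕ) : ℝ) := by push_cast; ring
        _ ≤ ((16 ^ n : ℕ) : ℝ) := by exact_mod_cast this
        _ = 16 ^ n := by push_cast; ring
    have h4 : ((4:ℝ) ^ n)^2 = 16 ^ n := by
      rw [← pow_mul, show (16:ℝ) = 4^2 by norm_num, ← pow_mul]
      ring_nf
    rw [hg]
    simp only [div_pow]
    rw [div_le_div_iff₀ (by positivity) (by positivity), one_mul, h4]
    exact hc
  have hmono : Tendsto (fun n : ℕ => 2*n+1) atTop atTop :=
    tendsto_atTop_mono (fun n => by simp only [id_eq]; omega) tendsto_id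
  have hlim1 : Tendsto (fun n : ℕ => 1 / ((2*n+1 : ℕ) : ℝ)) atTop (𝓝 0) :=
    (tendsto_const_div_atTop_nhds_zero_nat 1).comp hmono
  have hsq : Tendsto (fun n => (g n)^2) atTop (𝓝 0) :=
    squeeze_zero (fun n => sq_nonneg _) hbound hlim1
  have := (Real.continuous_sqrt.tendsto 0).comp hsq
  simp only [Function.comp_def, Real.sqrt_zero] at this
  convert this using 2 with n
  rw [Real.sqrt_sq (hgnn n)]

lemma cat_unfold (m' N : ℕ) : catalanTriangle (N+m'+1) (N+1)
    = (((2*N+m'+2).factorial * (m'+1) : ℕ) : ℝ)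
      / (((N+1).factorial * (N+m'+2).factorial : ℕ) : ℝ) := by
  have h1 : N+m'+1+(N+1) = 2*N+m'+2 := by omega
  have h2 : N+m'+1-(N+1) = m' := by omega
  have h3 : N+m'+1+1 = N+m'+2 := by omega
  rw [catalanTriangle, h1, h2, h3]

lemma catB (m' N : ℕ) :
    catalanTriangle (N+m'+1) (N+1)
      = ((2*N+m'+1).choose (N+1) : ℝ) - ((2*N+m'+1).choose (N+m'+2) : ℝ) := by
  rw [cat_unfold]
  cases N with
  | zero =>
    have hz : (2*0+m'+1).choose (0+m'+2) = 0 := by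
      apply Nat.choose_eq_zero_of_lt
      omega
    have ho : 2*0+m'+1 = m'+1 := by omega
    rw [hz, ho]
    simp only [Nat.choose_one_right, zero_add, Nat.cast_zero, sub_zero]
    have hne : ((m'+2).factorial : ℝ) ≠ 0 := by positivity
    rw [show 2*0+m'+2 = m'+2 from by omega]
    rw [Nat.factorial_one]
    push_cast
    field_simp
  | succ K =>
    rw [show 2*(K+1)+m'+2 = 2*K+m'+4 from by omega, show 2*(K+1)+m'+1 = 2*K+m'+3 from by omega,
        show K+1+1 = K+2 from by omega, show K+1+m'+2 = K+m'+3 from by omega]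
    have hc1 : ((2*K+m'+3).choose (K+2) : ℝ)
        = ((2*K+m'+3).factorial : ℝ) / (((K+2).factorial : ℝ) * ((K+m'+1).factorial : ℝ)) := by
      rw [Nat.cast_choose ℝ (show K+2 ≤ 2*K+m'+3 by omega),
          show 2*K+m'+3 - (K+2) = K+m'+1 from by omega]
    have hc2 : ((2*K+m'+3).choose (K+m'+3) : ℝ)
        = ((2*K+m'+3).factorial : ℝ) / (((K+m'+3).factorial : ℝ) * ((K.factorial) : ℝ)) := by
      rw [Nat.cast_choose ℝ (show K+m'+3 ≤ 2*K+m'+3 by omega),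
          show 2*K+m'+3 - (K+m'+3) = K from by omega]
    rw [hc1, hc2]
    have hf1 : ((2*K+m'+4).factorial : ℝ) = (2*K+m'+4) * ((2*K+m'+3).factorial : ℝ) := by
      rw [show 2*K+m'+4 = (2*K+m'+3)+1 from rfl, Nat.factorial_succ]
      push_cast
      ring
    have hf2 : ((K+m'+3).factorial : ℝ) = (K+m'+3) * (K+m'+2) * ((K+m'+1).factorial : ℝ) := by
      rw [show K+m'+3 = (K+m'+2)+1 from rfl, Nat.factorial_succ,
          show K+m'+2 = (K+m'+1)+1 from rfl, Nat.factorial_succ]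
      push_cast
      ring
    have hf3 : ((K+2).factorial : ℝ) = (K+2) * (K+1) * ((K.factorial) : ℝ) := by
      rw [show K+2 = (K+1)+1 from rfl, Nat.factorial_succ, Nat.factorial_succ]
      push_cast
      ring
    have hne1 : ((2*K+m'+3).factorial : ℝ) ≠ 0 := by positivity
    have hne2 : ((K+m'+1).factorial : ℝ) ≠ 0 := by positivity
    have hne3 : ((K.factorial) : ℝ) ≠ 0 := by positivity
    push_cast
    rw [hf1, hf2, hf3]
    field_simp
    ring

lemma cat_zero (m' : ℕ) : catalanTriangle m' 0 = 1 := by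
  rw [catalanTriangle]
  rw [show m' + 0 = m' from by omega, show m' - 0 + 1 = m' + 1 from by omega,
      Nat.factorial_zero, one_mul]
  rw [div_eq_one_iff_eq (by positivity)]
  congr 1
  rw [Nat.factorial_succ]
  ring

lemma psum (m' : ℕ) (N : ℕ) :
    ∑ l ∈ range (N+1), (1/2:ℝ)^(2*l+(m'+1)) * catalanTriangle (l+(m'+1)-1) l
      = 1 - (TTaux (m'+1) N : ℝ)/2^(2*N+(m'+1)) := by
  induction N with
  | zero =>
    rw [Finset.sum_range_one]
    rw [show 0+(m'+1)-1 = m' from by omega, cat_zero, show 2*0+(m'+1) = m'+1 from by omega]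
    have hT : (TTaux (m'+1) 0 : ℝ) + 1 = 2^(m'+1) := by
      have := TT_base (m'+1)
      exact_mod_cast congrArg (Nat.cast : ℕ → ℝ) this
    have h2 : ((2:ℝ))^(m'+1) ≠ 0 := by positivity
    rw [div_pow, one_pow]
    field_simp
    linarith
  | succ N ih =>
    rw [Finset.sum_range_succ, ih]
    rw [show N+1+(m'+1)-1 = N+m'+1 from by omega, catB m' N]
    have hstep := TT_step (m'+1) N
    rw [show 2*N+(m'+1) = 2*N+m'+1 from by omega,
        show N+(m'+1)+1 = N+m'+2 from by omega] at hstep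
    have hstepR : (TTaux (m'+1) (N+1) : ℝ)
        = 4*(TTaux (m'+1) N : ℝ) + ((2*N+m'+1).choose (N+m'+2) : ℝ)
          - ((2*N+m'+1).choose (N+1) : ℝ) := by
      have h := congrArg (Nat.cast : ℕ → ℝ) hstep
      push_cast at h
      linarith
    have hp : (2:ℝ)^(2*(N+1)+(m'+1)) = 4 * 2^(2*N+(m'+1)) := by
      rw [show 2*(N+1)+(m'+1) = (2*N+(m'+1))+2 from by omega, pow_add]
      ring
    have hp0 : ((2:ℝ))^(2*N+(m'+1)) ≠ 0 := by positivity
    rw [div_pow, one_pow, hp, hstepR]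
    rw [show 2*N+(m'+1) = 2*N+m'+1 from by omega] at hp0 ⊢
    field_simp
    ring

theorem catalan_triangle_sum_eq_one' (m : ℕ) (hm : 1 ≤ m) :
    ∑' l : ℕ, (1 / 2 : ℝ) ^ (2 * l + m) * catalanTriangle (l + m - 1) l = 1 := by
  obtain ⟨m', rfl⟩ : ∃ m', m = m'+1 := ⟨m-1, by omega⟩
  set f : ℕ → ℝ := fun l => (1/2:ℝ)^(2*l+(m'+1)) * catalanTriangle (l+(m'+1)-1) l with hf
  have hnn : ∀ l, 0 ≤ f l := by
    intro l
    apply mul_nonneg (by positivity)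
    rw [catalanTriangle]
    positivity
  have hbnd : ∀ N : ℕ, (TTaux (m'+1) N : ℝ)/2^(2*N+(m'+1))
      ≤ ((m'+1:ℕ):ℝ)*2^(m'+1) * ((Nat.centralBinom (N+(m'+1)) : ℝ)/4^(N+(m'+1))) := by
    intro N
    have hN : TTaux (m'+1) N ≤ (m'+1) * Nat.centralBinom (N+(m'+1)) := by
      calc TTaux (m'+1) N ≤ (range (m'+1)).card • Nat.centralBinom (N+(m'+1)) := by
            apply Finset.sum_le_card_nsmul
            intro i _
            calc (2*N+(m'+1)).choose (N+i) ≤ (2*(N+(m'+1))).choose (N+i) :=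
                  Nat.choose_le_choose _ (by omega)
              _ ≤ Nat.centralBinom (N+(m'+1)) := Nat.choose_le_centralBinom _ _
        _ = (m'+1) * Nat.centralBinom (N+(m'+1)) := by
            rw [Finset.card_range, smul_eq_mul]
    have h4 : (4:ℝ)^(N+(m'+1)) = 2^(2*N+(m'+1)) * 2^(m'+1) := by
      rw [show (4:ℝ) = 2^2 from by norm_num, ← pow_mul, ← pow_add]
      congr 1
      omega
    have heq : ((m'+1:ℕ):ℝ)*2^(m'+1) * ((Nat.centralBinom (N+(m'+1)) : ℝ)/4^(N+(m'+1)))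
        = (((m'+1) * Nat.centralBinom (N+(m'+1)) : ℕ) : ℝ)/2^(2*N+(m'+1)) := by
      rw [h4]
      push_cast
      field_simp
    rw [heq]
    apply div_le_div_of_nonneg_right ?_ (by positivity)
    · exact_mod_cast hN
  have hcomp : Tendsto (fun N : ℕ => (Nat.centralBinom (N+(m'+1)) : ℝ)/4^(N+(m'+1)))
      atTop (𝓝 0) := cB_tendsto.comp (tendsto_add_atTop_nat (m'+1))
  have hconst := hcomp.const_mul (((m'+1:ℕ):ℝ)*2^(m'+1))
  rw [mul_zero] at hconst
  have hten : Tendsto (fun N => (TTaux (m'+1) N : ℝ)/2^(2*N+(m'+1))) atTop (𝓝 0) :=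
    squeeze_zero (fun N => by positivity) hbnd hconst
  have h1 : Tendsto (fun N => ∑ l ∈ range (N+1), f l) atTop (𝓝 1) := by
    simp only [hf, psum]
    have h := Filter.Tendsto.sub (tendsto_const_nhds (x := (1:ℝ))) hten
    rw [sub_zero] at h
    exact h
  have h2 : Tendsto (fun N => ∑ l ∈ range N, f l) atTop (𝓝 1) := by
    rw [← Filter.tendsto_add_atTop_iff_nat 1]
    exact h1
  exact ((hasSum_iff_tendsto_nat_of_nonneg hnn 1).mpr h2).tsum_eq

/-- For every positive integer `m`, `∑_{l≥0} (1/2)^(2l+m) C(l+m-1,l) = 1`. -/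
theorem catalan_triangle_sum_eq_one (m : ℕ) (hm : 1 ≤ m) :
    ∑' l : ℕ, (1 / 2 : ℝ) ^ (2 * l + m) * catalanTriangle (l + m - 1) l = 1 :=
  catalan_triangle_sum_eq_one' m hm
end

section
/- For a simple symmetric random walk S_n = X_1 + ... + X_n with i.i.d. steps X_i uniform on {-1, +1}, and for positive integers m and l, the probability that the first hitting time of level m equals 2l+m is (1/2)^(2l+m) · C(l+m-1, l), where C(n,k) is the Catalan triangle entry (n+k)!(n-k+1)/(k!(n+1)!). -/
open MeasureTheory ProbabilityTheory

section BallotSection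

open Set ProbabilityTheory MeasureTheory
open scoped ENNReal

namespace Ballot

/-- The set of nonempty lists of integers which suffix has positive sum. -/
def staysPositive : Set (List ℤ) :=
  {l | ∀ l₂, l₂ ≠ [] → l₂ <:+ l → 0 < l₂.sum}

@[simp]
theorem staysPositive_nil : [] ∈ staysPositive :=
  fun _ hl hl₁ => (hl (List.eq_nil_of_suffix_nil hl₁)).elim

theorem staysPositive_suffix {l₁ l₂ : List ℤ} (hl₂ : l₂ ∈ staysPositive) (h : l₁ <:+ l₂) :
    l₁ ∈ staysPositive := fun l hne hl ↦ hl₂ l hne <| hl.trans h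

theorem staysPositive_cons {x : ℤ} {l : List ℤ} :
    x::l ∈ staysPositive ↔ l ∈ staysPositive ∧ 0 < x + l.sum := by
  simp [staysPositive, List.suffix_cons_iff, or_imp, forall_and, @imp.swap _ (_ = _), and_comm]

theorem sum_nonneg_of_staysPositive : ∀ {l : List ℤ}, l ∈ staysPositive → 0 ≤ l.sum
  | [], _ => le_rfl
  | (_::_), h => (h _ (List.cons_ne_nil _ _) List.suffix_rfl).le

theorem staysPositive_cons_pos (x : ℤ) (hx : 0 < x) (l : List ℤ) :
    (x::l) ∈ staysPositive ↔ l ∈ staysPositive := by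
  rw [staysPositive_cons, and_iff_left_iff_imp]
  intro h
  have := sum_nonneg_of_staysPositive h
  positivity

/-- `countedSequence p q` is the set of lists of integers for which every element is `+1` or `-1`,
there are `p` lots of `+1` and `q` lots of `-1`.

This represents vote sequences where candidate `+1` receives `p` votes and candidate `-1` receives
`q` votes.
-/
def countedSequence (p q : ℕ) : Set (List ℤ) :=
  {l | l.count 1 = p ∧ l.count (-1) = q ∧ ∀ x ∈ l, x = (1 : ℤ) ∨ x = -1}

open scoped List in
/-- An alternative definition of `countedSequence` that uses `List.Perm`. -/
theorem mem_countedSequence_iff_perm {p q l} :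
    l ∈ countedSequence p q ↔ l ~ List.replicate p (1 : ℤ) ++ List.replicate q (-1) := by
  rw [List.perm_replicate_append_replicate]
  · simp only [countedSequence, List.subset_def, mem_setOf_eq, List.mem_cons (b := (1 : ℤ)),
      List.mem_singleton]
  · norm_num1

@[simp]
theorem counted_right_zero (p : ℕ) : countedSequence p 0 = {List.replicate p 1} := by
  ext l; simp [mem_countedSequence_iff_perm]

@[simp]
theorem counted_left_zero (q : ℕ) : countedSequence 0 q = {List.replicate q (-1)} := by
  ext l; simp [mem_countedSequence_iff_perm]

theorem mem_of_mem_countedSequence {p q} {l} (hl : l ∈ countedSequence p q) {x : ℤ} (hx : x ∈ l) :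
    x = 1 ∨ x = -1 :=
  hl.2.2 x hx

theorem length_of_mem_countedSequence {p q} {l : List ℤ} (hl : l ∈ countedSequence p q) :
    l.length = p + q := by simp [(mem_countedSequence_iff_perm.1 hl).length_eq]

theorem counted_eq_nil_iff {p q : ℕ} {l : List ℤ} (hl : l ∈ countedSequence p q) :
    l = [] ↔ p = 0 ∧ q = 0 :=
  List.length_eq_zero_iff.symm.trans <| by simp [length_of_mem_countedSequence hl]

theorem counted_ne_nil_left {p q : ℕ} (hp : p ≠ 0) {l : List ℤ} (hl : l ∈ countedSequence p q) :
    l ≠ [] := by simp [counted_eq_nil_iff hl, hp]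

theorem counted_ne_nil_right {p q : ℕ} (hq : q ≠ 0) {l : List ℤ} (hl : l ∈ countedSequence p q) :
    l ≠ [] := by simp [counted_eq_nil_iff hl, hq]

theorem counted_succ_succ (p q : ℕ) :
    countedSequence (p + 1) (q + 1) =
      List.cons 1 '' countedSequence p (q + 1) ∪ List.cons (-1) '' countedSequence (p + 1) q := by
  ext l
  rw [countedSequence, countedSequence, countedSequence]
  constructor
  · intro hl
    have hlnil := counted_ne_nil_left (Nat.succ_ne_zero p) hl
    obtain ⟨hl₀, hl₁, hl₂⟩ := hl
    obtain hlast | hlast := hl₂ (l.head hlnil) (List.head_mem hlnil)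
    · refine Or.inl ⟨l.tail, ⟨?_, ?_, ?_⟩, ?_⟩
      · rw [List.count_tail, hl₀, List.head?_eq_some_head hlnil, hlast, beq_self_eq_true, if_pos rfl, Nat.add_sub_cancel]
      · rw [List.count_tail, hl₁, List.head?_eq_some_head hlnil, hlast, if_neg (by decide), Nat.sub_zero]
      · exact fun x hx => hl₂ x (List.mem_of_mem_tail hx)
      · rw [← hlast, List.cons_head_tail]
    · refine Or.inr ⟨l.tail, ⟨?_, ?_, ?_⟩, ?_⟩
      · rw [List.count_tail, hl₀, List.head?_eq_some_head hlnil, hlast, if_neg (by decide), Nat.sub_zero]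
      · rw [List.count_tail, hl₁, List.head?_eq_some_head hlnil, hlast, beq_self_eq_true, if_pos rfl,
          Nat.add_sub_cancel]
      · exact fun x hx => hl₂ x (List.mem_of_mem_tail hx)
      · rw [← hlast, List.cons_head_tail]
  · rintro (⟨t, ⟨ht₀, ht₁, ht₂⟩, rfl⟩ | ⟨t, ⟨ht₀, ht₁, ht₂⟩, rfl⟩)
    · refine ⟨?_, ?_, ?_⟩
      · rw [List.count_cons, beq_self_eq_true, if_pos rfl, ht₀]
      · rw [List.count_cons, if_neg, ht₁]
        norm_num
      · rintro x (_ | _)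
        exacts [Or.inl rfl, ht₂ x (by tauto)]
    · refine ⟨?_, ?_, ?_⟩
      · rw [List.count_cons, if_neg, ht₀]
        norm_num
      · rw [List.count_cons, beq_self_eq_true, if_pos rfl, ht₁]
      · rintro x (_ | _)
        exacts [Or.inr rfl, ht₂ x (by tauto)]

theorem countedSequence_finite : ∀ p q : ℕ, (countedSequence p q).Finite
  | 0, q => by simp
  | p + 1, 0 => by simp
  | p + 1, q + 1 => by
    rw [counted_succ_succ, Set.finite_union, Set.finite_image_iff List.cons_injective.injOn,
      Set.finite_image_iff List.cons_injective.injOn]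
    exact ⟨countedSequence_finite _ _, countedSequence_finite _ _⟩

theorem countedSequence_nonempty : ∀ p q : ℕ, (countedSequence p q).Nonempty
  | 0, q => by simp
  | p + 1, 0 => by simp
  | p + 1, q + 1 => by
    rw [counted_succ_succ, union_nonempty, image_nonempty]
    exact Or.inl (countedSequence_nonempty _ _)

theorem sum_of_mem_countedSequence {p q} {l : List ℤ} (hl : l ∈ countedSequence p q) :
    l.sum = p - q := by simp [(mem_countedSequence_iff_perm.1 hl).sum_eq, sub_eq_add_neg]

theorem disjoint_bits (p q : ℕ) :
    Disjoint (List.cons 1 '' countedSequence p (q + 1))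
      (List.cons (-1) '' countedSequence (p + 1) q) := by
  simp_rw [disjoint_left, mem_image, not_exists, exists_imp]
  rintro _ _ ⟨_, rfl⟩ _ ⟨_, _, _⟩

open MeasureTheory.Measure

def measureableSpace_list_int : MeasurableSpace (List ℤ) := ⊤

attribute [local instance] measureableSpace_list_int

theorem measurableSingletonClass_list_int : MeasurableSingletonClass (List ℤ) :=
  { measurableSet_singleton := fun _ => trivial }

attribute [local instance] measurableSingletonClass_list_int

theorem list_int_measurableSet {s : Set (List ℤ)} : MeasurableSet s := trivial

theorem count_countedSequence : ∀ p q : ℕ, count (countedSequence p q) = (p + q).choose p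
  | p, 0 => by simp [counted_right_zero, count_singleton]
  | 0, q => by simp [counted_left_zero, count_singleton]
  | p + 1, q + 1 => by
    rw [counted_succ_succ, measure_union (disjoint_bits _ _) list_int_measurableSet,
      count_injective_image List.cons_injective, count_countedSequence _ _,
      count_injective_image List.cons_injective, count_countedSequence _ _]
    norm_cast
    rw [add_assoc, add_comm 1 q, ← Nat.choose_succ_succ, Nat.succ_eq_add_one, add_right_comm]

theorem first_vote_pos :
    ∀ p q,
      0 < p + q → uniformOn (countedSequence p q : Set (List ℤ)) {l | l.headI = 1} = p / (p + q)
  | p + 1, 0, _ => by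
    rw [counted_right_zero, uniformOn_singleton]
    simp [ENNReal.div_self _ _, List.replicate_succ]
  | 0, q + 1, _ => by
    rw [counted_left_zero, uniformOn_singleton]
    simp only [List.replicate, Nat.add_eq, add_zero, mem_setOf_eq, List.headI_cons, Nat.cast_zero,
      ENNReal.zero_div, ite_eq_right_iff]
    decide
  | p + 1, q + 1, _ => by
    simp_rw [counted_succ_succ]
    rw [← uniformOn_disjoint_union ((countedSequence_finite _ _).image _)
        ((countedSequence_finite _ _).image _) (disjoint_bits _ _),
      ← counted_succ_succ,
      uniformOn_eq_one_of ((countedSequence_finite p (q + 1)).image _)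
        ((countedSequence_nonempty _ _).image _)]
    · have : List.cons (-1) '' countedSequence (p + 1) q ∩ {l : List ℤ | l.headI = 1} = ∅ := by
        ext
        simp only [mem_inter_iff, mem_image, mem_setOf_eq, mem_empty_iff_false, iff_false,
          not_and, forall_exists_index, and_imp]
        rintro l _ rfl
        norm_num
      have hint :
        countedSequence (p + 1) (q + 1) ∩ List.cons 1 '' countedSequence p (q + 1) =
          List.cons 1 '' countedSequence p (q + 1) := by
        rw [inter_eq_right, counted_succ_succ]
        exact subset_union_left
      rw [(uniformOn_eq_zero_iff <| (countedSequence_finite _ _).image _).2 this, uniformOn,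
        cond_apply list_int_measurableSet, hint, count_injective_image List.cons_injective,
        count_countedSequence, count_countedSequence, one_mul, zero_mul, add_zero,
        Nat.cast_add, Nat.cast_one, mul_comm, ← div_eq_mul_inv, ENNReal.div_eq_div_iff]
      · norm_cast
        rw [mul_comm _ (p + 1), ← Nat.succ_eq_add_one p, Nat.succ_add, Nat.add_one_mul_choose_eq,
          mul_comm]
      all_goals simp [(Nat.choose_pos <| le_add_of_nonneg_right zero_le').ne']
    · simp

theorem headI_mem_of_nonempty {α : Type*} [Inhabited α] : ∀ {l : List α} (_ : l ≠ []), l.headI ∈ l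
  | [], h => (h rfl).elim
  | x::l, _ => List.mem_cons_self

theorem first_vote_neg (p q : ℕ) (h : 0 < p + q) :
    uniformOn (countedSequence p q) {l | l.headI = 1}ᶜ = q / (p + q) := by
  have h' : (p + q : ℝ≥0∞) ≠ 0 := mod_cast h.ne'
  have := uniformOn_compl
    {l : List ℤ | l.headI = 1}ᶜ (countedSequence_finite p q) (countedSequence_nonempty p q)
  rw [compl_compl, first_vote_pos _ _ h] at this
  rw [ENNReal.eq_sub_of_add_eq _ this, ENNReal.eq_div_iff, ENNReal.mul_sub, mul_one,
    ENNReal.mul_div_cancel', ENNReal.add_sub_cancel_left]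
  all_goals simp_all [ENNReal.div_eq_top]

theorem ballot_same (p : ℕ) : uniformOn (countedSequence (p + 1) (p + 1)) staysPositive = 0 := by
  rw [uniformOn_eq_zero_iff (countedSequence_finite _ _), eq_empty_iff_forall_notMem]
  rintro x ⟨hx, t⟩
  apply ne_of_gt (t x _ x.suffix_refl)
  · simpa using sum_of_mem_countedSequence hx
  · refine List.ne_nil_of_length_pos ?_
    rw [length_of_mem_countedSequence hx]
    exact Nat.add_pos_left (Nat.succ_pos _) _

theorem ballot_edge (p : ℕ) : uniformOn (countedSequence (p + 1) 0) staysPositive = 1 := by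
  rw [counted_right_zero]
  refine uniformOn_eq_one_of (finite_singleton _) (singleton_nonempty _) ?_
  refine singleton_subset_iff.2 fun l hl₁ hl₂ => List.sum_pos _ (fun x hx => ?_) hl₁
  rw [List.eq_of_mem_replicate (hl₂.mem hx)]
  norm_num

theorem countedSequence_int_pos_counted_succ_succ (p q : ℕ) :
    countedSequence (p + 1) (q + 1) ∩ {l | l.headI = 1} =
      (countedSequence p (q + 1)).image (List.cons 1) := by
  rw [counted_succ_succ, union_inter_distrib_right,
      (_ : List.cons (-1) '' countedSequence (p + 1) q ∩ {l | l.headI = 1} = ∅), union_empty] <;>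
    · ext
      simp only [mem_inter_iff, mem_image, mem_setOf_eq, and_iff_left_iff_imp, mem_empty_iff_false,
        iff_false, not_and, forall_exists_index, and_imp]
      rintro y _ rfl
      norm_num

theorem ballot_pos (p q : ℕ) :
    uniformOn (countedSequence (p + 1) (q + 1) ∩ {l | l.headI = 1}) staysPositive =
      uniformOn (countedSequence p (q + 1)) staysPositive := by
  rw [countedSequence_int_pos_counted_succ_succ, uniformOn, uniformOn,
    cond_apply list_int_measurableSet, cond_apply list_int_measurableSet,
    count_injective_image List.cons_injective]
  congr 1
  have : (1 :: ·) '' countedSequence p (q + 1) ∩ staysPositive =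
      (1 :: ·) '' (countedSequence p (q + 1) ∩ staysPositive) := by
    simp only [image_inter List.cons_injective, Set.ext_iff, mem_inter_iff, and_congr_right_iff,
      forall_mem_image, List.cons_injective.mem_set_image, staysPositive_cons_pos _ one_pos]
    exact fun _ _ ↦ trivial
  rw [this, count_injective_image]
  exact List.cons_injective

theorem countedSequence_int_neg_counted_succ_succ (p q : ℕ) :
    countedSequence (p + 1) (q + 1) ∩ {l | l.headI = 1}ᶜ =
      (countedSequence (p + 1) q).image (List.cons (-1)) := by
  rw [counted_succ_succ, union_inter_distrib_right,
      (_ : List.cons 1 '' countedSequence p (q + 1) ∩ {l : List ℤ | l.headI = 1}ᶜ = ∅),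
      empty_union] <;>
    · ext
      simp only [mem_inter_iff, mem_image, mem_setOf_eq, and_iff_left_iff_imp, mem_empty_iff_false,
        iff_false, not_and, forall_exists_index, and_imp]
      rintro y _ rfl
      norm_num

theorem ballot_neg (p q : ℕ) (qp : q < p) :
    uniformOn (countedSequence (p + 1) (q + 1) ∩ {l | l.headI = 1}ᶜ) staysPositive =
      uniformOn (countedSequence (p + 1) q) staysPositive := by
  rw [countedSequence_int_neg_counted_succ_succ, uniformOn, uniformOn,
    cond_apply list_int_measurableSet, cond_apply list_int_measurableSet,
    count_injective_image List.cons_injective]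
  congr 1
  have : List.cons (-1) '' countedSequence (p + 1) q ∩ staysPositive =
      List.cons (-1) '' (countedSequence (p + 1) q ∩ staysPositive) := by
    simp only [image_inter List.cons_injective, Set.ext_iff, mem_inter_iff, and_congr_right_iff,
      forall_mem_image, List.cons_injective.mem_set_image, staysPositive_cons, and_iff_left_iff_imp]
    intro l hl _
    simp [sum_of_mem_countedSequence hl, lt_sub_iff_add_lt', qp]
  rw [this, count_injective_image]
  exact List.cons_injective

theorem ballot_problem' :
    ∀ q p, q < p → (uniformOn (countedSequence p q) staysPositive).toReal = (p - q) / (p + q) := by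
  classical
  apply Nat.diag_induction
  · intro p
    rw [ballot_same]
    simp
  · intro p
    rw [ballot_edge]
    simp only [ENNReal.toReal_one, Nat.cast_add, Nat.cast_one, Nat.cast_zero, sub_zero, add_zero]
    rw [div_self]
    exact Nat.cast_add_one_ne_zero p
  · intro q p qp h₁ h₂
    haveI := uniformOn_isProbabilityMeasure
      (countedSequence_finite p (q + 1)) (countedSequence_nonempty _ _)
    haveI := uniformOn_isProbabilityMeasure
      (countedSequence_finite (p + 1) q) (countedSequence_nonempty _ _)
    have h₃ : p + 1 + (q + 1) > 0 := Nat.add_pos_left (Nat.succ_pos _) _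
    rw [← uniformOn_add_compl_eq {l : List ℤ | l.headI = 1} _ (countedSequence_finite _ _),
      first_vote_pos _ _ h₃, first_vote_neg _ _ h₃, ballot_pos, ballot_neg _ _ qp]
    rw [ENNReal.toReal_add, ENNReal.toReal_mul, ENNReal.toReal_mul, ← Nat.cast_add,
      ENNReal.toReal_div, ENNReal.toReal_div, ENNReal.toReal_natCast, ENNReal.toReal_natCast,
      ENNReal.toReal_natCast, h₁, h₂]
    · have h₄ : (p + 1 : ℝ) + (q + 1 : ℝ) ≠ (0 : ℝ) := by
        apply ne_of_gt
        assumption_mod_cast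
      have h₅ : (p + 1 : ℝ) + ↑q ≠ (0 : ℝ) := by
        apply ne_of_gt
        norm_cast
        linarith
      have h₆ : ↑p + (q + 1 : ℝ) ≠ (0 : ℝ) := by
        apply ne_of_gt
        norm_cast
        linarith
      field_simp [h₄, h₅, h₆] at *
      push_cast
      ring
    all_goals exact ENNReal.mul_ne_top (measure_ne_top _ _) (by simp [Ne, ENNReal.div_eq_top])

/-- The ballot problem. -/
theorem ballot_problem :
    ∀ q p, q < p → uniformOn (countedSequence p q) staysPositive = (p - q) / (p + q) := by
  intro q p qp
  haveI :=
    uniformOn_isProbabilityMeasure (countedSequence_finite p q) (countedSequence_nonempty _ _)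
  have :
    (uniformOn (countedSequence p q) staysPositive).toReal =
      ((p - q) / (p + q) : ℝ≥0∞).toReal := by
    rw [ballot_problem' q p qp]
    rw [ENNReal.toReal_div, ← Nat.cast_add, ← Nat.cast_add, ENNReal.toReal_natCast,
      ENNReal.toReal_sub_of_le, ENNReal.toReal_natCast, ENNReal.toReal_natCast]
    exacts [Nat.cast_le.2 qp.le, ENNReal.natCast_ne_top _]
  rwa [ENNReal.toReal_eq_toReal_iff' (measure_lt_top _ _).ne] at this
  simp only [Ne, ENNReal.div_eq_top, tsub_eq_zero_iff_le, Nat.cast_le, not_le,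
    add_eq_zero, Nat.cast_eq_zero, ENNReal.add_eq_top, ENNReal.natCast_ne_top, or_self_iff,
    not_false_iff, and_true]
  push_neg
  exact ⟨fun _ _ => by linarith, (tsub_le_self.trans_lt (ENNReal.natCast_ne_top p).lt_top).ne⟩

end Ballot
end BallotSection

open scoped ENNReal

namespace SRWAux

open Finset

lemma walk_lt (N : ℕ) (m : ℤ) (hm : 1 ≤ m) (v : ℕ → ℤ) (hv : ∀ i < N, v i ≤ 1)
    (hne : ∀ n < N, (∑ k ∈ Finset.range n, v k) ≠ m) :
    ∀ n < N, (∑ k ∈ Finset.range n, v k) < m := by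
  intro n
  induction n with
  | zero => intro _; simp; omega
  | succ n ih =>
    intro h
    have h1 := ih (Nat.lt_of_succ_lt h)
    have h2 := hv n (Nat.lt_of_succ_lt h)
    have h3 := hne (n+1) h
    rw [Finset.sum_range_succ] at h3 ⊢
    omega

lemma count_and_sum : ∀ (L : List ℤ), (∀ x ∈ L, x = 1 ∨ x = -1) →
    (L.count 1 : ℤ) + L.count (-1) = L.length ∧ L.sum = (L.count 1 : ℤ) - L.count (-1) := by
  intro L
  induction L with
  | nil => simp
  | cons x t ih =>
    intro hx
    obtain ⟨h1, h2⟩ := ih (fun y hy => hx y (List.mem_cons_of_mem _ hy))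
    rcases hx x (by simp) with rfl | rfl <;>
      · simp [List.count_cons, List.sum_cons, h2]
        push_cast
        omega

lemma sum_filter_eq_sum_range (N n : ℕ) (hn : n ≤ N) (v : ℕ → ℤ) :
    ∑ j ∈ Finset.univ.filter (fun j : Fin N => (j : ℕ) < n), v j
      = ∑ k ∈ Finset.range n, v k := by
  rw [Finset.sum_filter, Fin.sum_univ_eq_sum_range (fun k => if k < n then v k else 0) N,
    ← Finset.sum_filter]
  congr 1
  ext k
  simp only [Finset.mem_filter, Finset.mem_range]
  omega

lemma take_sum (N n : ℕ) (hn : n ≤ N) (v : ℕ → ℤ) :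
    ((List.ofFn (fun i : Fin N => v i)).take n).sum = ∑ k ∈ Finset.range n, v k := by
  rw [List.sum_take_ofFn, sum_filter_eq_sum_range N n hn]

end SRWAux

namespace SRWAux

open Ballot

lemma key (l m : ℕ) (hm : 1 ≤ m) (v : ℕ → ℤ)
    (hv : ∀ i < 2*l+m, v i = 1 ∨ v i = -1) :
    (List.ofFn (fun i : Fin (2*l+m) => v i) ∈ countedSequence (l+m) l ∩ staysPositive)
    ↔ ((∑ k ∈ Finset.range (2*l+m), v k) = (m:ℤ) ∧
       ∀ n < 2*l+m, (∑ k ∈ Finset.range n, v k) ≠ (m:ℤ)) := by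
  set N := 2*l+m with hN
  set lst := List.ofFn (fun i : Fin N => v i) with hlst
  have hlen : lst.length = N := by simp [hlst]
  have hmem : ∀ x ∈ lst, x = 1 ∨ x = -1 := by
    intro x hx
    rw [hlst, List.mem_ofFn] at hx
    obtain ⟨i, rfl⟩ := hx
    exact hv i i.isLt
  have hsum : lst.sum = ∑ k ∈ Finset.range N, v k := by
    rw [hlst, List.sum_ofFn, Fin.sum_univ_eq_sum_range]
  obtain ⟨hcs, hss⟩ := count_and_sum lst hmem
  have htakesum : ∀ n ≤ N, (lst.take n).sum = ∑ k ∈ Finset.range n, v k := by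
    intro n hn
    rw [hlst, take_sum N n hn v]
  constructor
  · rintro ⟨⟨hc1, hc2, -⟩, hpos⟩
    have hsm : lst.sum = (m:ℤ) := by rw [hss, hc1, hc2]; push_cast; omega
    refine ⟨by rw [← hsum, hsm], ?_⟩
    intro n hn hcontra
    have hdropne : lst.drop n ≠ [] := by
      apply List.ne_nil_of_length_pos
      rw [List.length_drop, hlen]
      omega
    have hp := hpos (lst.drop n) hdropne (List.drop_suffix n lst)
    have htd := List.sum_take_add_sum_drop lst n
    rw [htakesum n hn.le, hcontra, hsm] at htd
    omega
  · rintro ⟨hsm, hne⟩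
    have hlt := walk_lt N (m:ℤ) (by exact_mod_cast hm) v
      (fun i hi => by rcases hv i hi with h|h <;> omega) hne
    constructor
    · have h1 : (lst.count 1 : ℤ) + lst.count (-1) = N := by rw [hcs, hlen]
      have h2 : (lst.count 1 : ℤ) - lst.count (-1) = m := by rw [← hss, hsum, hsm]
      refine ⟨?_, ?_, hmem⟩ <;> omega
    · intro l₂ hne2 hsuf
      obtain ⟨t, ht⟩ := hsuf
      have hl2 : l₂ = lst.drop t.length := by rw [← ht, List.drop_left]
      have hlt2 : t.length < N := by
        have hlc := congrArg List.length ht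
        rw [List.length_append, hlen] at hlc
        have : l₂.length ≠ 0 := fun h => hne2 (List.length_eq_zero_iff.mp h)
        omega
      have htd := List.sum_take_add_sum_drop lst t.length
      rw [htakesum t.length hlt2.le] at htd
      have hw := hlt t.length hlt2
      rw [hl2]
      rw [hsum, hsm] at htd
      omega

end SRWAux

namespace SRWAux

open Ballot MeasureTheory ProbabilityTheory

attribute [local instance] Ballot.measureableSpace_list_int Ballot.measurableSingletonClass_list_int


lemma count_L (l m : ℕ) (hm : 1 ≤ m)
    (hfin : (countedSequence (l+m) l ∩ staysPositive).Finite) :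
    hfin.toFinset.card * (2*l+m) = (2*l+m).choose (l+m) * m := by
  have qp : l < l + m := by omega
  have hb := ballot_problem l (l+m) qp
  rw [uniformOn, ProbabilityTheory.cond_apply list_int_measurableSet, count_countedSequence] at hb
  have hc0 : ((l+m+l).choose (l+m) : ℝ≥0∞) ≠ 0 := by
    exact_mod_cast (Nat.choose_pos (by omega)).ne'
  have hctop : ((l+m+l).choose (l+m) : ℝ≥0∞) ≠ ⊤ := ENNReal.natCast_ne_top _
  have hcount : Measure.count (countedSequence (l+m) l ∩ staysPositive)
      = ((l+m+l).choose (l+m) : ℝ≥0∞) * ((↑(l+m) - ↑l) / (↑(l+m) + ↑l)) := by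
    rw [← hb, ← mul_assoc, ENNReal.mul_inv_cancel hc0 hctop, one_mul]
  rw [Measure.count_apply_finite _ hfin] at hcount
  have hsub : ((l+m : ℕ) : ℝ≥0∞) - (l : ℕ) = (m : ℕ) := by
    rw [Nat.cast_add]
    exact ENNReal.add_sub_cancel_left (ENNReal.natCast_ne_top l)
  have hadd : ((l+m : ℕ) : ℝ≥0∞) + (l : ℕ) = ((2*l+m : ℕ) : ℝ≥0∞) := by
    push_cast; ring
  rw [hsub, hadd] at hcount
  have h2 : ((2*l+m : ℕ) : ℝ≥0∞) ≠ 0 := by exact_mod_cast (by omega : 2*l+m ≠ 0)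
  have h2t : ((2*l+m : ℕ) : ℝ≥0∞) ≠ ⊤ := ENNReal.natCast_ne_top _
  have : (hfin.toFinset.card : ℝ≥0∞) * (2*l+m : ℕ)
      = ((l+m+l).choose (l+m) : ℝ≥0∞) * (m : ℕ) := by
    rw [hcount, mul_assoc, ENNReal.div_mul_cancel h2 h2t]
  have hfin' : hfin.toFinset.card * (2*l+m) = (l+m+l).choose (l+m) * m := by
    exact_mod_cast this
  have : l+m+l = 2*l+m := by omega
  rw [this] at hfin'
  exact hfin'

lemma catalan_eq (l m card : ℕ) (hm : 1 ≤ m)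
    (h : card * (2*l+m) = (2*l+m).choose (l+m) * m) :
    _root_.catalanTriangle (l+m-1) l = (card : ℝ) := by
  have hc := Nat.choose_mul_factorial_mul_factorial (show l+m ≤ 2*l+m by omega)
  have e1 : 2*l+m - (l+m) = l := by omega
  rw [e1] at hc
  unfold _root_.catalanTriangle
  have e3 : l+m-1+l = 2*l+m-1 := by omega
  have e4 : l+m-1-l+1 = m := by omega
  have e5 : l+m-1+1 = l+m := by omega
  rw [e3, e4, e5]
  have hden : ((l.factorial * (l+m).factorial : ℕ) : ℝ) ≠ 0 := by
    positivity
  rw [div_eq_iff hden]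
  have h' : (card : ℝ) * (2*l+m) = ((2*l+m).choose (l+m) : ℝ) * m := by exact_mod_cast h
  have hc' : ((2*l+m).choose (l+m) : ℝ) * (l+m).factorial * l.factorial
      = (2*l+m).factorial := by exact_mod_cast hc
  have hfsn : (2*l+m).factorial = (2*l+m) * (2*l+m-1).factorial := by
    have e2 : 2*l+m = (2*l+m-1)+1 := by omega
    conv_lhs => rw [e2]
    rw [Nat.factorial_succ, ← e2]
  have hfs : ((2*l+m).factorial : ℝ) = ((2*l+m : ℕ) : ℝ) * (2*l+m-1).factorial := by
    exact_mod_cast hfsn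
  have h2ne : ((2*l+m : ℕ) : ℝ) ≠ 0 := by positivity
  apply mul_left_cancel₀ h2ne
  push_cast
  push_cast at h' hc' hfs
  linear_combination (-((l.factorial : ℝ) * (l+m).factorial)) * h' - (m:ℝ) * hc' - (m:ℝ) * hfs

end SRWAux

open MeasureTheory ProbabilityTheory

/-- For a simple symmetric random walk `S_n = X_1 + ⋯ + X_n` with i.i.d. steps uniform on
`{-1,+1}`, and positive integers `m, l`, the probability that the first hitting time of level
`m` equals `2l+m` is `(1/2)^(2l+m) C(l+m-1, l)`.  (The event `τ_m = 2l+m` is: `S_{2l+m} = m`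
and `S_n ≠ m` for all `n < 2l+m`.) -/
theorem srw_first_hitting_time_prob
    {Ω : Type*} [MeasurableSpace Ω] (μ : Measure Ω) [IsProbabilityMeasure μ]
    (X : ℕ → Ω → ℤ) (hmeas : ∀ i, Measurable (X i))
    (hindep : iIndepFun X μ)
    (hup : ∀ i, μ {ω | X i ω = 1} = 1 / 2)
    (hdown : ∀ i, μ {ω | X i ω = -1} = 1 / 2)
    (l m : ℕ) (hl : 1 ≤ l) (hm : 1 ≤ m) :
    μ {ω | (∑ k ∈ Finset.range (2 * l + m), X k ω) = (m : ℤ) ∧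
        ∀ n < 2 * l + m, (∑ k ∈ Finset.range n, X k ω) ≠ (m : ℤ)} =
      ENNReal.ofReal ((1 / 2 : ℝ) ^ (2 * l + m) * catalanTriangle (l + m - 1) l) := by
  classical
  set N := 2 * l + m with hN
  set L : Set (List ℤ) := Ballot.countedSequence (l+m) l ∩ Ballot.staysPositive with hLdef
  have hLfin : L.Finite := (Ballot.countedSequence_finite _ _).inter_of_left _
  have hLlen : ∀ lst ∈ L, lst.length = N := by
    intro lst hlst
    have := Ballot.length_of_mem_countedSequence hlst.1
    omega
  have hLval : ∀ lst ∈ L, ∀ i < N, lst.getD i 0 = 1 ∨ lst.getD i 0 = -1 := by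
    intro lst hlst i hi
    rw [List.getD_eq_getElem lst 0 (by rw [hLlen lst hlst]; exact hi)]
    exact Ballot.mem_of_mem_countedSequence hlst.1 (List.getElem_mem _)
  -- the event set
  set E : Set Ω := {ω | (∑ k ∈ Finset.range N, X k ω) = (m : ℤ) ∧
        ∀ n < N, (∑ k ∈ Finset.range n, X k ω) ≠ (m : ℤ)} with hEdef
  -- the good set
  set G : Set Ω := ⋂ i ∈ Finset.range N, ({ω | X i ω = 1} ∪ {ω | X i ω = -1}) with hGdef
  have hXmeas : ∀ (i : ℕ) (c : ℤ), MeasurableSet {ω | X i ω = c} := by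
    intro i c
    exact hmeas i (measurableSet_singleton c)
  have hGmeas : MeasurableSet G := by
    refine Finset.measurableSet_biInter _ (fun i _ => ((hXmeas i 1).union (hXmeas i (-1))))
  have hGc : μ Gᶜ = 0 := by
    have h1 : ∀ i : ℕ, μ ({ω | X i ω = 1} ∪ {ω | X i ω = -1}) = 1 := by
      intro i
      rw [measure_union ?_ (hXmeas i (-1)), hup i, hdown i]
      · rw [ENNReal.div_add_div_same]
        norm_num
        exact ENNReal.div_self (two_ne_zero) (ENNReal.ofNat_ne_top)
      · rw [Set.disjoint_left]
        intro ω h1 h2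
        simp only [Set.mem_setOf_eq] at h1 h2
        omega
    have h2 : ∀ i : ℕ, μ ({ω | X i ω = 1} ∪ {ω | X i ω = -1})ᶜ = 0 := by
      intro i
      rw [measure_compl ((hXmeas i 1).union (hXmeas i (-1))) (measure_ne_top _ _), h1 i,
        measure_univ, tsub_self]
    have : Gᶜ = ⋃ i ∈ Finset.range N, ({ω | X i ω = 1} ∪ {ω | X i ω = -1})ᶜ := by
      simp [hGdef, Set.compl_iInter]
    rw [this]
    refine le_antisymm ?_ zero_le
    calc μ (⋃ i ∈ Finset.range N, ({ω | X i ω = 1} ∪ {ω | X i ω = -1})ᶜ)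
        ≤ ∑ i ∈ Finset.range N, μ (({ω | X i ω = 1} ∪ {ω | X i ω = -1})ᶜ) :=
          measure_biUnion_finset_le _ _
      _ = 0 := Finset.sum_eq_zero fun i _ => h2 i
  have hGmem : ∀ ω, ω ∈ G ↔ ∀ i < N, X i ω = 1 ∨ X i ω = -1 := by
    intro ω
    simp [hGdef]
  -- cylinders
  set Cyl : List ℤ → Set Ω := fun lst => ⋂ i ∈ Finset.range N, X i ⁻¹' {lst.getD i 0}
    with hCyldef
  have hCylmem : ∀ lst ω, ω ∈ Cyl lst ↔ ∀ i < N, X i ω = lst.getD i 0 := by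
    intro lst ω
    simp [hCyldef]
  have hCylmeas : ∀ lst, MeasurableSet (Cyl lst) :=
    fun lst => Finset.measurableSet_biInter _
      (fun i _ => hmeas i (measurableSet_singleton _))
  have hCylμ : ∀ lst ∈ hLfin.toFinset, μ (Cyl lst) = (1/2 : ℝ≥0∞)^N := by
    intro lst hlst
    rw [Set.Finite.mem_toFinset] at hlst
    rw [hCyldef]
    rw [hindep.measure_inter_preimage_eq_mul (Finset.range N)
      (fun i _ => measurableSet_singleton _)]
    rw [Finset.prod_congr rfl (g := fun _ => (1/2 : ℝ≥0∞)) (fun i hi => ?_),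
      Finset.prod_const, Finset.card_range]
    have hi' : i < N := Finset.mem_range.mp hi
    rcases hLval lst hlst i hi' with h | h <;> rw [h]
    · exact hup i
    · exact hdown i
  -- the split
  have hsplit : E ∩ G = ⋃ lst ∈ hLfin.toFinset, Cyl lst := by
    ext ω
    simp only [Set.mem_inter_iff, Set.mem_iUnion, exists_prop]
    constructor
    · rintro ⟨⟨h1, h2⟩, hg⟩
      have hg' : ∀ i < N, X i ω = 1 ∨ X i ω = -1 := (hGmem ω).mp hg
      refine ⟨List.ofFn (fun i : Fin N => X (i : ℕ) ω), ?_, ?_⟩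
      · rw [Set.Finite.mem_toFinset]
        exact (SRWAux.key l m hm (fun k => X k ω) hg').mpr ⟨h1, h2⟩
      · rw [hCylmem]
        intro i hi
        rw [List.getD_eq_getElem _ 0 (by simpa using hi), List.getElem_ofFn]
    · rintro ⟨lst, hlst, hcyl⟩
      rw [Set.Finite.mem_toFinset] at hlst
      have hX : ∀ i < N, X i ω = lst.getD i 0 := (hCylmem lst ω).mp hcyl
      have hvals := hLval lst hlst
      have hofn : List.ofFn (fun i : Fin N => lst.getD (i : ℕ) 0) = lst := by
        apply List.ext_getElem (by simp [hLlen lst hlst])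
        intro i h1 h2
        rw [List.getElem_ofFn]
        exact List.getD_eq_getElem lst 0 h2
      have hkey := (SRWAux.key l m hm (fun k => lst.getD k 0) hvals).mp
        (by rw [hofn]; exact hlst)
      have hsums : ∀ n ≤ N, (∑ k ∈ Finset.range n, X k ω) = ∑ k ∈ Finset.range n, lst.getD k 0 :=
        fun n hn => Finset.sum_congr rfl
          (fun k hk => hX k (lt_of_lt_of_le (Finset.mem_range.mp hk) hn))
      refine ⟨⟨?_, ?_⟩, ?_⟩
      · rw [hsums N le_rfl]; exact hkey.1
      · intro n hn
        rw [hsums n hn.le]; exact hkey.2 n hn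
      · rw [hGmem]
        intro i hi
        rw [hX i hi]
        exact hvals i hi
  -- disjointness
  have hdisj : (hLfin.toFinset : Set (List ℤ)).PairwiseDisjoint Cyl := by
    intro a ha b hb hab
    rw [Finset.mem_coe, Set.Finite.mem_toFinset] at ha hb
    rw [Function.onFun, Set.disjoint_left]
    intro ω hωa hωb
    apply hab
    apply List.ext_getElem (by rw [hLlen a ha, hLlen b hb])
    intro i h1 h2
    have hiN : i < N := by rw [← hLlen a ha]; exact h1
    rw [← List.getD_eq_getElem a 0 h1, ← List.getD_eq_getElem b 0 h2,
      ← (hCylmem a ω).mp hωa i hiN, ← (hCylmem b ω).mp hωb i hiN]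
  -- measure computation
  have hEG : μ E = μ (E ∩ G) := by
    have := measure_inter_add_diff E hGmeas (μ := μ)
    have hdiff : μ (E \ G) = 0 :=
      le_antisymm (le_trans (measure_mono (Set.diff_subset_compl E G)) hGc.le) zero_le
    rw [← this, hdiff, add_zero]
  have hcard := SRWAux.count_L l m hm hLfin
  have hμE : μ E = (hLfin.toFinset.card : ℝ≥0∞) * (1/2 : ℝ≥0∞)^N := by
    rw [hEG, hsplit, measure_biUnion_finset hdisj (fun lst _ => hCylmeas lst),
      Finset.sum_congr rfl hCylμ, Finset.sum_const, nsmul_eq_mul]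
  show μ E = _
  rw [hμE, SRWAux.catalan_eq l m hLfin.toFinset.card hm hcard,
    ENNReal.ofReal_mul (by positivity), ENNReal.ofReal_pow (by norm_num),
    ENNReal.ofReal_natCast, mul_comm]
  congr 1
  rw [ENNReal.ofReal_div_of_pos (by norm_num), ENNReal.ofReal_one, ENNReal.ofReal_ofNat]
end

section
/- For all integers l ≥ 1 and m ≥ 1, the quantity (1/2)^(2l+m) · C(l+m-1, l) is at least 2^{-m} / (3√6) · 1/l^{3/2}, where C(n,k) = (n+k)!(n-k+1)/(k!(n+1)!). -/
lemma cb_sq : ∀ l : ℕ, 1 ≤ l → 16 ^ l ≤ 4 * l * (Nat.centralBinom l)^2 := by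
  intro l hl
  induction l with
  | zero => omega
  | succ n ih =>
    rcases Nat.eq_zero_or_pos n with h | h
    · subst h; simp [Nat.centralBinom]
    · have IH := ih h
      have key := Nat.succ_mul_centralBinom_succ n
      have key2 : ((n+1) * Nat.centralBinom (n+1))^2 = (2*(2*n+1)*Nat.centralBinom n)^2 := by
        rw [key]
      set cb := Nat.centralBinom n with hcbdef
      have h1 : (n+1)^2 * 16^(n+1) ≤ (n+1)^2 * (4*(n+1)*(Nat.centralBinom (n+1))^2) := by
        calc (n+1)^2 * 16^(n+1) = 16*(n+1)^2 * 16^n := by ring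
        _ ≤ 16*(n+1)^2 * (4*n*cb^2) := Nat.mul_le_mul_left _ IH
        _ = (64*n*(n+1)^2) * cb^2 := by ring
        _ ≤ (16*(n+1)*(2*n+1)^2) * cb^2 := Nat.mul_le_mul_right _ (by nlinarith)
        _ = 4*(n+1)*(2*(2*n+1)*cb)^2 := by ring
        _ = (n+1)^2 * (4*(n+1)*(Nat.centralBinom (n+1))^2) := by rw [← key2]; ring
      exact Nat.le_of_mul_le_mul_left h1 (by positivity)

lemma cb_real (l : ℕ) (hl : 1 ≤ l) :
    (4:ℝ)^l ≤ 2 * Real.sqrt l * Nat.centralBinom l := by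
  have h := cb_sq l hl
  have h4 : (0:ℝ) ≤ (4:ℝ)^l := by positivity
  have h2 : (0:ℝ) ≤ 2 * Real.sqrt l * Nat.centralBinom l := by positivity
  have h' : ((4:ℝ)^l)^2 ≤ (2 * Real.sqrt l * Nat.centralBinom l)^2 := by
    have hs : (Real.sqrt l)^2 = (l:ℝ) := Real.sq_sqrt (by positivity)
    have hcast : (16:ℝ)^l ≤ 4 * l * (Nat.centralBinom l : ℝ)^2 := by exact_mod_cast h
    calc ((4:ℝ)^l)^2 = (16:ℝ)^l := by rw [← pow_mul, pow_mul']; norm_num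
    _ ≤ 4 * l * (Nat.centralBinom l : ℝ)^2 := hcast
    _ = (2 * Real.sqrt l * Nat.centralBinom l)^2 := by rw [mul_pow, mul_pow, hs]; ring
  exact (pow_le_pow_iff_left₀ h4 h2 (by norm_num)).mp h'

lemma factA (l : ℕ) : ∀ m' : ℕ,
    (2*l).factorial * (l+m'+1).factorial ≤ (m'+1) * (2*l+m').factorial * (l+1).factorial := by
  intro m'
  induction m' with
  | zero => simp
  | succ k ih =>
    have e1 : (l+(k+1)+1).factorial = (l+k+2) * (l+k+1).factorial := by
      rw [show l+(k+1)+1 = (l+k+1)+1 by ring, Nat.factorial_succ]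
    have e2 : (2*l+(k+1)).factorial = (2*l+k+1) * (2*l+k).factorial := by
      rw [show 2*l+(k+1) = (2*l+k)+1 by ring, Nat.factorial_succ]
    calc (2*l).factorial * (l+(k+1)+1).factorial
        = (l+k+2) * ((2*l).factorial * (l+k+1).factorial) := by rw [e1]; ring
      _ ≤ (l+k+2) * ((k+1) * (2*l+k).factorial * (l+1).factorial) :=
          Nat.mul_le_mul_left _ (by simpa [Nat.add_assoc] using ih)
      _ = ((l+k+2)*(k+1)) * ((2*l+k).factorial * (l+1).factorial) := by ring
      _ ≤ ((k+2)*(2*l+k+1)) * ((2*l+k).factorial * (l+1).factorial) :=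
          Nat.mul_le_mul_right _ (by nlinarith)
      _ = (k+1+1) * (2*l+(k+1)).factorial * (l+1).factorial := by rw [e2]; ring

/-- For all `l, m ≥ 1`, `(1/2)^(2l+m) C(l+m-1,l) ≥ 2^{-m}/(3√6) · 1/l^{3/2}`. -/
theorem catalan_triangle_lower_bound (l m : ℕ) (hl : 1 ≤ l) (hm : 1 ≤ m) :
    (1 / 2 : ℝ) ^ m / (3 * Real.sqrt 6) * (1 / (l : ℝ) ^ ((3 : ℝ) / 2)) ≤
      (1 / 2 : ℝ) ^ (2 * l + m) * catalanTriangle (l + m - 1) l := by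
  obtain ⟨m', rfl⟩ : ∃ m', m = m' + 1 := ⟨m - 1, by omega⟩
  have hl0 : (0:ℝ) < l := by exact_mod_cast hl
  have hsl : (0:ℝ) < Real.sqrt l := Real.sqrt_pos.mpr hl0
  have hs : Real.sqrt l * Real.sqrt l = (l:ℝ) := Real.mul_self_sqrt hl0.le
  have hsl1 : (1:ℝ) ≤ Real.sqrt l := by
    rw [show (1:ℝ) = Real.sqrt 1 by simp]
    exact Real.sqrt_le_sqrt (by exact_mod_cast hl)
  have h6 : (2.4:ℝ) ≤ Real.sqrt 6 := by
    rw [show (2.4:ℝ) = Real.sqrt (2.4^2) by rw [Real.sqrt_sq]; norm_num]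
    exact Real.sqrt_le_sqrt (by norm_num)
  -- simplify the catalanTriangle term
  have hn : l + (m' + 1) - 1 = l + m' := by omega
  have hct : catalanTriangle (l + (m' + 1) - 1) l =
      (((2*l+m').factorial * (m'+1) : ℕ) : ℝ) / ((l.factorial * (l+m'+1).factorial : ℕ) : ℝ) := by
    rw [hn]
    unfold catalanTriangle
    rw [show l+m'+l = 2*l+m' from by omega, show l+m'-l = m' from by omega]
  rw [hct]
  -- notation
  set cb : ℕ := Nat.centralBinom l with hcb
  have hF : (0:ℝ) < (l.factorial : ℝ) := by exact_mod_cast l.factorial_pos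
  have hG : (0:ℝ) < ((l+1).factorial : ℝ) := by exact_mod_cast (l+1).factorial_pos
  have hD : (0:ℝ) < ((l+m'+1).factorial : ℝ) := by exact_mod_cast (l+m'+1).factorial_pos
  have hcbpos : (0:ℝ) < (cb:ℝ) := by exact_mod_cast Nat.centralBinom_pos l
  -- Step 1: monotone in m
  have hmono : ((2*l).factorial : ℝ) / ((l.factorial : ℝ) * (l+1).factorial) ≤
      (((2*l+m').factorial * (m'+1) : ℕ) : ℝ) / ((l.factorial * (l+m'+1).factorial : ℕ) : ℝ) := by
    push_cast
    rw [div_le_div_iff₀ (by positivity) (by positivity)]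
    have hA := factA l m'
    have hA' : ((2*l).factorial * (l+m'+1).factorial : ℝ) ≤
        ((m'+1) * (2*l+m').factorial * (l+1).factorial : ℝ) := by exact_mod_cast hA
    nlinarith [hF, hA', (l+m'+1).factorial_pos, (l+1).factorial_pos]
  -- Step 2: (2l)! = cb * l! * l!
  have hC1 : ((2*l).factorial : ℝ) = (cb:ℝ) * l.factorial * l.factorial := by
    have := Nat.choose_mul_factorial_mul_factorial (show l ≤ 2*l by omega)
    have h2l : 2*l - l = l := by omega
    rw [h2l] at this
    have : (cb:ℕ) * (l.factorial * l.factorial) = (2*l).factorial := by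
      rw [hcb, Nat.centralBinom]; rw [← this]; ring
    rw [← this]; push_cast; ring
  have hGfac : ((l+1).factorial : ℝ) = (l+1) * l.factorial := by
    rw [Nat.factorial_succ]; push_cast; ring
  have hBval : ((2*l).factorial : ℝ) / ((l.factorial : ℝ) * (l+1).factorial) =
      (cb:ℝ) / (l+1) := by
    rw [hC1, hGfac]
    field_simp
  -- Step 3: key inequality at m = 1
  have hkey : 1 / (3 * Real.sqrt 6) * (1 / (l : ℝ) ^ ((3 : ℝ) / 2)) ≤
      (1/2:ℝ)^(2*l) * ((cb:ℝ) / (l+1)) := by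
    have hrpow : (l:ℝ) ^ ((3:ℝ)/2) = l * Real.sqrt l := by
      rw [show (3:ℝ)/2 = 1 + 1/2 by norm_num, Real.rpow_add hl0, Real.rpow_one,
        Real.sqrt_eq_rpow]
    have hhalf : (1/2:ℝ)^(2*l) = 1 / (4:ℝ)^l := by
      rw [pow_mul]
      norm_num
      rw [← inv_pow]
      norm_num
    rw [hrpow, hhalf]
    have h4pos : (0:ℝ) < (4:ℝ)^l := by positivity
    rw [div_mul_div_comm, div_mul_div_comm, one_mul, one_mul,
      div_le_div_iff₀ (by positivity) (by positivity)]
    have hcbr := cb_real l hl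
    rw [← hcb] at hcbr
    -- goal : 1 * (4^l * (l+1)) ≤ cb * (3√6 * (l * √l))
    have step1 : (4:ℝ)^l * (l+1) ≤ 2 * Real.sqrt l * cb * (l+1) := by
      apply mul_le_mul_of_nonneg_right hcbr (by positivity)
    have step2 : 2 * Real.sqrt l * (cb:ℝ) * (l+1) ≤ (cb:ℝ) * (3 * Real.sqrt 6 * (l * Real.sqrt l)) := by
      have hfac : 2 * Real.sqrt l * ((l:ℝ)+1) ≤ 3 * Real.sqrt 6 * (l * Real.sqrt l) := by
        nlinarith [hs, hsl1, h6, hsl, hl0, mul_le_mul_of_nonneg_left hsl1 hl0.le]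
      nlinarith [mul_le_mul_of_nonneg_left hfac hcbpos.le]
    linarith
  -- assemble
  have main : 1 / (3 * Real.sqrt 6) * (1 / (l : ℝ) ^ ((3 : ℝ) / 2)) ≤
      (1/2:ℝ)^(2*l) * ((((2*l+m').factorial * (m'+1) : ℕ) : ℝ) /
        ((l.factorial * (l+m'+1).factorial : ℕ) : ℝ)) := by
    calc 1 / (3 * Real.sqrt 6) * (1 / (l : ℝ) ^ ((3 : ℝ) / 2))
        ≤ (1/2:ℝ)^(2*l) * ((cb:ℝ) / (l+1)) := hkey
      _ = (1/2:ℝ)^(2*l) * (((2*l).factorial : ℝ) / ((l.factorial : ℝ) * (l+1).factorial)) := by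
          rw [hBval]
      _ ≤ _ := mul_le_mul_of_nonneg_left hmono (by positivity)
  calc (1/2:ℝ)^(m'+1) / (3 * Real.sqrt 6) * (1 / (l : ℝ) ^ ((3 : ℝ) / 2))
      = (1/2:ℝ)^(m'+1) * (1 / (3 * Real.sqrt 6) * (1 / (l : ℝ) ^ ((3 : ℝ) / 2))) := by ring
    _ ≤ (1/2:ℝ)^(m'+1) * ((1/2:ℝ)^(2*l) * ((((2*l+m').factorial * (m'+1) : ℕ) : ℝ) /
        ((l.factorial * (l+m'+1).factorial : ℕ) : ℝ))) :=
        mul_le_mul_of_nonneg_left main (by positivity)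
    _ = (1/2:ℝ)^(2*l+(m'+1)) * ((((2*l+m').factorial * (m'+1) : ℕ) : ℝ) /
        ((l.factorial * (l+m'+1).factorial : ℕ) : ℝ)) := by rw [pow_add]; ring
end

section
/- Define π^{(1)}_{(i;m)} = Σ_{l=0}^{i-1} (1/2)^{2l+m} C(l+m-1, l). Then for every fixed positive integer m, as i → ∞, π^{(1)}_{(i;m)} = 1 - C_m/√i + o(1/√i) for some constant C_m > 0 depending only on m; in particular π^{(1)}_{(i;m)} → 1 and the tail 1 - π^{(1)}_{(i;m)} is bounded above by m·i^{-1/2} and below by a positive constant (depending on m) times i^{-1/2}. -/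
open Filter

/-- `π^{(1)}_{(i;m)} = ∑_{l=0}^{i-1} (1/2)^(2l+m) C(l+m-1,l)`. -/
noncomputable def piOne (i m : ℕ) : ℝ :=
  ∑ l ∈ Finset.range i, (1 / 2 : ℝ) ^ (2 * l + m) * catalanTriangle (l + m - 1) l

open Real Finset

lemma double_pascal (n r : ℕ) :
    (n+2).choose (r+2) = n.choose r + 2 * n.choose (r+1) + n.choose (r+2) := by
  rw [show r+2 = (r+1)+1 by ring, Nat.choose_succ_succ (n+1) (r+1),
    Nat.choose_succ_succ n r, Nat.choose_succ_succ n (r+1)]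
  ring

lemma lemmaA (n k m : ℕ) :
    ∑ j ∈ range m, (n+2).choose (k+2+j) + n.choose (k+m) + n.choose (k+1)
      = 4 * ∑ j ∈ range m, n.choose (k+1+j) + n.choose k + n.choose (k+1+m) := by
  induction m with
  | zero => simp [Nat.add_comm]
  | succ m ih =>
    rw [Finset.sum_range_succ, Finset.sum_range_succ]
    have dp := double_pascal n (k+m)
    have e1 : k+2+m = k+m+2 := by ring
    have e2 : k+1+m = k+m+1 := by ring
    rw [e1]
    rw [e2] at ih
    rw [e2, show k+1+(m+1) = k+m+2 by ring, show k+(m+1) = k+m+1 by ring]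
    linarith [ih, dp]

lemma keyL1 (k m : ℕ) :
    ∑ j ∈ range m, (2*k+m+2).choose (k+2+j) + (2*k+m+1).choose (k+1)
      = 4 * ∑ j ∈ range m, (2*k+m).choose (k+1+j) + (2*k+m+1).choose k := by
  have hA := Nat.choose_symm (show k+m ≤ 2*k+m by omega)
  rw [show 2*k+m-(k+m) = k from by omega] at hA
  have hB : (2*k+m+1).choose (k+1) = (2*k+m).choose k + (2*k+m).choose (k+1) :=
    Nat.choose_succ_succ _ _
  have hC : (2*k+m+1).choose k = (2*k+m).choose k + (2*k+m).choose (k+1+m) := by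
    rcases Nat.eq_zero_or_pos k with hk | hk
    · subst hk
      simp [Nat.choose_eq_zero_of_lt (by omega : m < 0+1+m)]
    · obtain ⟨k', rfl⟩ : ∃ k', k = k'+1 := ⟨k-1, by omega⟩
      rw [Nat.choose_succ_succ (2*(k'+1)+m) k']
      have h2 := Nat.choose_symm (show k'+1+1+m ≤ 2*(k'+1)+m by omega)
      rw [show 2*(k'+1)+m-(k'+1+1+m) = k' from by omega] at h2
      rw [← h2]
      ring
  have hL := lemmaA (2*k+m) k m
  linarith [hL, hA, hB, hC]

lemma cb_stirling (n : ℕ) (hn : 1 ≤ n) :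
    Stirling.stirlingSeq (2 * n) / (Stirling.stirlingSeq n) ^ 2 =
      Real.sqrt n * (Nat.centralBinom n : ℝ) / 4 ^ n := by
  have hx : (0:ℝ) < n := by exact_mod_cast hn
  have hF : (0:ℝ) < (n.factorial : ℝ) := by exact_mod_cast n.factorial_pos
  have hF2 : (0:ℝ) < ((2*n).factorial : ℝ) := by exact_mod_cast (2*n).factorial_pos
  have he : (0:ℝ) < Real.exp 1 := Real.exp_pos 1
  unfold Stirling.stirlingSeq Nat.centralBinom
  rw [Nat.cast_choose ℝ (by omega : n ≤ 2 * n), show 2*n-n = n by omega]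
  push_cast
  have h4 : ((2:ℝ) * n / Real.exp 1) ^ (2 * n) = 4 ^ n * (((n:ℝ) / Real.exp 1) ^ n) ^ 2 := by
    rw [div_pow, div_pow, mul_pow]
    rw [show ((2:ℝ))^(2*n) = 4^n by rw [pow_mul]; norm_num]
    ring
  have hsq : Real.sqrt (2 * (2 * (n:ℝ))) = 2 * Real.sqrt n := by
    rw [show (2:ℝ) * (2 * n) = 2^2 * n by ring,
      Real.sqrt_mul (by positivity), Real.sqrt_sq (by norm_num)]
  have hsq2 : Real.sqrt (2 * (n:ℝ)) = Real.sqrt 2 * Real.sqrt n := Real.sqrt_mul (by norm_num) _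
  rw [h4, hsq, hsq2]
  have hsn : Real.sqrt n ≠ 0 := by positivity
  have hs2 : Real.sqrt 2 ≠ 0 := by positivity
  have ha : ((n:ℝ) / Real.exp 1) ^ n ≠ 0 := by positivity
  have h2 : Real.sqrt 2 ^ 2 = 2 := Real.sq_sqrt (by norm_num)
  have h3 : Real.sqrt n ^ 2 = n := Real.sq_sqrt (le_of_lt hx)
  field_simp
  ring_nf
  rw [h2]

lemma cb_tendsto :
    Tendsto (fun n : ℕ => Real.sqrt n * (Nat.centralBinom n : ℝ) / 4 ^ n) atTop
      (nhds (1 / Real.sqrt π)) := by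
  have hpi : Real.sqrt π ≠ 0 := by positivity
  have h1 : Tendsto (fun n : ℕ => Stirling.stirlingSeq (2 * n)) atTop (nhds (Real.sqrt π)) :=
    Stirling.tendsto_stirlingSeq_sqrt_pi.comp (tendsto_atTop_atTop_of_monotone
      (fun a b h => by omega) (fun b => ⟨b, by omega⟩))
  have h2 : Tendsto (fun n : ℕ => (Stirling.stirlingSeq n) ^ 2) atTop (nhds (Real.sqrt π ^ 2)) :=
    Stirling.tendsto_stirlingSeq_sqrt_pi.pow 2
  have h3 := h1.div h2 (by positivity)
  have : Real.sqrt π / Real.sqrt π ^ 2 = 1 / Real.sqrt π := by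
    field_simp
  rw [this] at h3
  exact h3.congr' (by filter_upwards [eventually_ge_atTop 1] with n hn using cb_stirling n hn)

lemma catal (k m : ℕ) (hm : 1 ≤ m) :
    catalanTriangle (k+m) (k+1)
      = ((2*k+m+1).choose (k+1) : ℝ) - ((2*k+m+1).choose k : ℝ) := by
  unfold catalanTriangle
  rw [Nat.cast_choose ℝ (show k+1 ≤ 2*k+m+1 by omega),
    Nat.cast_choose ℝ (show k ≤ 2*k+m+1 by omega)]
  rw [show 2*k+m+1-(k+1) = k+m from by omega, show 2*k+m+1-k = k+m+1 from by omega]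
  rw [show k+m+(k+1) = 2*k+m+1 from by ring, show k+m-(k+1)+1 = m from by omega]
  push_cast
  rw [show (k+m+1) = (k+m)+1 from rfl, Nat.factorial_succ (k+m), Nat.factorial_succ k]
  have h1 : (0:ℝ) < ((2*k+m+1).factorial : ℝ) := by exact_mod_cast Nat.factorial_pos _
  have h2 : (0:ℝ) < ((k+m).factorial : ℝ) := by exact_mod_cast Nat.factorial_pos _
  have h3 : (0:ℝ) < (k.factorial : ℝ) := by exact_mod_cast Nat.factorial_pos _
  have h4 : (0:ℝ) < (k:ℝ) + 1 := by positivity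
  have h5 : (0:ℝ) < (k:ℝ) + (m:ℝ) + 1 := by positivity
  field_simp
  push_cast
  ring

noncomputable def Ttail (k m : ℕ) : ℝ :=
  ((∑ j ∈ Finset.range m, (2*k+m).choose (k+1+j) : ℕ) : ℝ) / 2^(2*k+m)

lemma tstep (k m : ℕ) (hm : 1 ≤ m) :
    Ttail k m - Ttail (k+1) m
      = (1/2:ℝ)^(2*(k+1)+m) * catalanTriangle (k+1+m-1) (k+1) := by
  have hk : k+1+m-1 = k+m := by omega
  rw [hk, catal k m hm]
  unfold Ttail
  have hsum : (∑ j ∈ range m, (2*(k+1)+m).choose (k+1+1+j))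
      = ∑ j ∈ range m, (2*k+m+2).choose (k+2+j) := by
    apply Finset.sum_congr rfl
    intro j _
    congr 1 <;> omega
  rw [hsum]
  have hcast : ((∑ j ∈ range m, (2*k+m+2).choose (k+2+j) : ℕ):ℝ)
      = 4 * ((∑ j ∈ range m, (2*k+m).choose (k+1+j) : ℕ):ℝ)
        + ((2*k+m+1).choose k : ℝ) - ((2*k+m+1).choose (k+1) : ℝ) := by
    have h := congrArg (fun x : ℕ => (x:ℝ)) (keyL1 k m)
    push_cast at h ⊢
    linarith
  rw [hcast]
  rw [show 2*(k+1)+m = 2*k+m+2 from by ring]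
  have hp : (0:ℝ) < 2^(2*k+m) := by positivity
  rw [pow_succ, pow_succ]
  field_simp
  simp only [one_div, inv_pow]
  field_simp
  ring

lemma tbase (m : ℕ) (hm : 1 ≤ m) : piOne 1 m = 1 - Ttail 0 m := by
  unfold piOne Ttail catalanTriangle
  rw [Finset.sum_range_one]
  have h1 : 0 + m - 1 = m - 1 := by omega
  rw [h1]
  have h2 : (m-1) + 0 = m - 1 := by omega
  have h3 : m - 1 - 0 + 1 = m := by omega
  have h4 : m - 1 + 1 = m := by omega
  rw [h2, h3, h4]
  have hfac : ((m-1).factorial * m : ℕ) = m.factorial := by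
    rw [← h4, Nat.factorial_succ, h4]; ring
  have hsum : (∑ j ∈ range m, (2*0+m).choose (0+1+j)) = 2^m - 1 := by
    have := Nat.sum_range_choose m
    have h5 := Finset.sum_range_succ' (fun i => m.choose i) m
    simp only [Nat.choose_zero_right] at h5
    have hs : (∑ j ∈ range m, (2*0+m).choose (0+1+j)) = ∑ j ∈ range m, m.choose (j+1) := by
      apply Finset.sum_congr rfl; intro j _; congr 1 <;> omega
    omega
  rw [hsum, hfac]
  have hm2 : (1:ℕ) ≤ 2^m := Nat.one_le_two_pow
  have hfp : (0:ℝ) < (m.factorial : ℝ) := by exact_mod_cast m.factorial_pos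
  have hp : (0:ℝ) < (2:ℝ)^m := by positivity
  push_cast [hm2]
  rw [show 2*0+m = m from by omega]
  field_simp
  rw [← mul_pow]
  norm_num

lemma piOne_eq (m : ℕ) (hm : 1 ≤ m) : ∀ k, piOne (k+1) m = 1 - Ttail k m := by
  intro k
  induction k with
  | zero => exact tbase m hm
  | succ k ih =>
    have hs : piOne (k+2) m = piOne (k+1) m
        + (1/2:ℝ)^(2*(k+1)+m) * catalanTriangle (k+1+m-1) (k+1) := by
      unfold piOne
      rw [Finset.sum_range_succ]
    rw [hs, ih]
    have := tstep k m hm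
    linarith

lemma sqrt_cb_aux {a b c d : ℝ} (ha : 0 ≤ a) (hc : 0 ≤ c) (hb : 0 ≤ b) (hd : 0 ≤ d)
    (h : a^2 * b ≤ c^2 * d) : a * Real.sqrt b ≤ c * Real.sqrt d := by
  rw [show a * Real.sqrt b = Real.sqrt (a^2*b) by
      rw [Real.sqrt_mul (by positivity), Real.sqrt_sq ha],
    show c * Real.sqrt d = Real.sqrt (c^2*d) by
      rw [Real.sqrt_mul (by positivity), Real.sqrt_sq hc]]
  exact Real.sqrt_le_sqrt h

lemma cb_succ_real (n : ℕ) :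
    (Nat.centralBinom (n+1) : ℝ) = 2 * (2*n+1) * Nat.centralBinom n / (n+1) := by
  have h := Nat.succ_mul_centralBinom_succ n
  have h' := congrArg (fun x : ℕ => (x:ℝ)) h
  push_cast at h'
  have : ((n:ℝ)+1) ≠ 0 := by positivity
  field_simp
  linarith

lemma cb_upper : ∀ n : ℕ, (Nat.centralBinom n : ℝ) / 4^n ≤ 1 / Real.sqrt (n+1) := by
  intro n
  induction n with
  | zero => simp [Nat.centralBinom]
  | succ n ih =>
    rw [cb_succ_real n]
    have hn1 : (0:ℝ) < (n:ℝ)+1 := by positivity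
    have hs1 : (0:ℝ) < Real.sqrt ((n:ℝ)+1) := Real.sqrt_pos.mpr hn1
    have hs2 : (0:ℝ) < Real.sqrt ((n:ℝ)+1+1) := Real.sqrt_pos.mpr (by positivity)
    have key : (2*(n:ℝ)+1) * Real.sqrt ((n:ℝ)+1+1) ≤ (2*(n:ℝ)+2) * Real.sqrt ((n:ℝ)+1) := by
      apply sqrt_cb_aux (by positivity) (by positivity) (by positivity) (by positivity)
      nlinarith [sq_nonneg ((n:ℝ))]
    have hcb : (0:ℝ) ≤ (Nat.centralBinom n : ℝ) := by positivity
    -- (2(2n+1) c /(n+1)) / 4^(n+1) = ((2n+1)/(2n+2)) * (c/4^n)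
    have heq : (2 * (2*(n:ℝ)+1) * Nat.centralBinom n / ((n:ℝ)+1)) / 4^(n+1)
        = ((2*(n:ℝ)+1)/(2*(n:ℝ)+2)) * ((Nat.centralBinom n : ℝ)/4^n) := by
      rw [pow_succ]
      field_simp
      ring
    rw [heq]
    have h2 : ((2*(n:ℝ)+1)/(2*(n:ℝ)+2)) * ((Nat.centralBinom n : ℝ)/4^n)
        ≤ ((2*(n:ℝ)+1)/(2*(n:ℝ)+2)) * (1/Real.sqrt ((n:ℝ)+1)) :=
      mul_le_mul_of_nonneg_left ih (by positivity)
    refine le_trans h2 ?_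
    rw [div_mul_div_comm, mul_one]
    push_cast
    rw [div_le_div_iff₀ (by positivity) hs2]
    linarith [key]

lemma cb_lower : ∀ n : ℕ, 1 ≤ n → 1 / (2 * Real.sqrt n) ≤ (Nat.centralBinom n : ℝ) / 4^n := by
  intro n hn
  induction n with
  | zero => omega
  | succ n ih =>
    rcases Nat.eq_zero_or_pos n with h0 | h1
    · subst h0
      norm_num [Nat.centralBinom]
    · have ihn := ih h1
      rw [cb_succ_real n]
      have hn0 : (0:ℝ) < (n:ℝ) := by exact_mod_cast h1
      have hs1 : (0:ℝ) < Real.sqrt (n:ℝ) := Real.sqrt_pos.mpr hn0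
      have hs2 : (0:ℝ) < Real.sqrt ((n:ℝ)+1) := Real.sqrt_pos.mpr (by positivity)
      have key : (2*(n:ℝ)+2) * Real.sqrt (n:ℝ) ≤ (2*(n:ℝ)+1) * Real.sqrt ((n:ℝ)+1) := by
        apply sqrt_cb_aux (by positivity) (by positivity) (by positivity) (by positivity)
        nlinarith [hn0]
      have heq : (2 * (2*(n:ℝ)+1) * Nat.centralBinom n / ((n:ℝ)+1)) / 4^(n+1)
          = ((2*(n:ℝ)+1)/(2*(n:ℝ)+2)) * ((Nat.centralBinom n : ℝ)/4^n) := by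
        rw [pow_succ]
        have : ((n:ℝ)+1) ≠ 0 := by positivity
        field_simp
        ring
      rw [heq]
      have h2 : ((2*(n:ℝ)+1)/(2*(n:ℝ)+2)) * (1/(2*Real.sqrt (n:ℝ)))
          ≤ ((2*(n:ℝ)+1)/(2*(n:ℝ)+2)) * ((Nat.centralBinom n : ℝ)/4^n) :=
        mul_le_mul_of_nonneg_left ihn (by positivity)
      refine le_trans ?_ h2
      rw [div_mul_div_comm, mul_one]
      push_cast
      rw [div_le_div_iff₀ (by positivity) (by positivity)]
      nlinarith [key, hs1, hs2]

lemma choose_le_mid (k : ℕ) : ∀ m r : ℕ, (2*k+m+1).choose r ≤ 2^m * (2*k+1).choose k := by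
  intro m
  induction m with
  | zero =>
    intro r
    have h := Nat.choose_le_middle r (2*k+1)
    simpa [show (2*k+1)/2 = k from by omega] using h
  | succ m ih =>
    intro r
    rcases r with _ | r
    · simpa using Nat.one_le_two_pow.trans
        (Nat.le_mul_of_pos_right _ (Nat.choose_pos (by omega : k ≤ 2*k+1))
          |>.trans_eq rfl) |>.trans (le_refl _)
    · have h1 := ih r
      have h2 := ih (r+1)
      have : (2*k+(m+1)+1).choose (r+1) = (2*k+m+1).choose r + (2*k+m+1).choose (r+1) := by
        rw [show 2*k+(m+1)+1 = (2*k+m+1)+1 from by ring]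
        exact Nat.choose_succ_succ _ _
      rw [this, pow_succ]
      nlinarith [h1, h2]

lemma two_choose_eq_cb (k : ℕ) : 2 * (2*k+1).choose k = Nat.centralBinom (k+1) := by
  have h1 : Nat.centralBinom (k+1) = (2*k+1).choose k + (2*k+1).choose (k+1) := by
    rw [Nat.centralBinom, show 2*(k+1) = (2*k+1)+1 from by ring]
    exact Nat.choose_succ_succ _ _
  have h2 := Nat.choose_symm (show k+1 ≤ 2*k+1 by omega)
  rw [show 2*k+1-(k+1) = k from by omega] at h2
  omega

lemma Ttail_le (k m : ℕ) (hm : 1 ≤ m) :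
    Ttail k m ≤ m * (Nat.centralBinom (k+1) : ℝ) / 4^(k+1) := by
  obtain ⟨m', rfl⟩ : ∃ m', m = m'+1 := ⟨m-1, by omega⟩
  have hsum : (∑ j ∈ Finset.range (m'+1), (2*k+(m'+1)).choose (k+1+j))
      ≤ (m'+1) * (2^m' * (2*k+1).choose k) := by
    calc (∑ j ∈ Finset.range (m'+1), (2*k+(m'+1)).choose (k+1+j))
        ≤ ∑ _j ∈ Finset.range (m'+1), 2^m' * (2*k+1).choose k := by
          apply Finset.sum_le_sum
          intro j _
          have := choose_le_mid k m' (k+1+j)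
          rwa [show 2*k+m'+1 = 2*k+(m'+1) from by ring] at this
      _ = (m'+1) * (2^m' * (2*k+1).choose k) := by
          rw [Finset.sum_const, Finset.card_range]; ring
  unfold Ttail
  rw [div_le_iff₀ (by positivity)]
  have hcast : ((∑ j ∈ Finset.range (m'+1), (2*k+(m'+1)).choose (k+1+j) : ℕ) : ℝ)
      ≤ ((m'+1) : ℝ) * (2^m' * ((2*k+1).choose k : ℝ)) := by
    exact_mod_cast hsum
  refine hcast.trans ?_
  have hcb : ((2*k+1).choose k : ℝ) = (Nat.centralBinom (k+1) : ℝ) / 2 := by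
    have := two_choose_eq_cb k
    have h' := congrArg (fun x : ℕ => (x:ℝ)) this
    push_cast at h'
    linarith
  rw [hcb]
  have h4 : (4:ℝ)^(k+1) = 2^(2*(k+1)) := by
    rw [show (4:ℝ) = 2^2 from by norm_num, ← pow_mul]
  rw [h4]
  apply le_of_eq
  push_cast
  field_simp
  ring

lemma Ttail_ge (k m : ℕ) (hm : 1 ≤ m) :
    (Nat.centralBinom k : ℝ) / 4^k / 2^m ≤ Ttail k m := by
  have h1 : Nat.centralBinom k ≤ (2*k+m).choose (k+1+(m-1)) := by
    rw [show k+1+(m-1) = k+m from by omega]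
    have hsym := Nat.choose_symm (show k+m ≤ 2*k+m by omega)
    rw [show 2*k+m-(k+m) = k from by omega] at hsym
    rw [← hsym]
    exact Nat.choose_le_choose _ (by omega)
  have h2 : (2*k+m).choose (k+1+(m-1)) ≤ ∑ j ∈ Finset.range m, (2*k+m).choose (k+1+j) :=
    Finset.single_le_sum (f := fun j => (2*k+m).choose (k+1+j))
      (fun _ _ => Nat.zero_le _) (Finset.mem_range.mpr (by omega))
  have h3 : (Nat.centralBinom k : ℝ) ≤
      ((∑ j ∈ Finset.range m, (2*k+m).choose (k+1+j) : ℕ) : ℝ) := by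
    exact_mod_cast h1.trans h2
  unfold Ttail
  have h4 : (4:ℝ)^k * 2^m = 2^(2*k+m) := by
    rw [show (4:ℝ) = 2^2 from by norm_num, ← pow_mul, ← pow_add]
  rw [div_div, h4, div_le_div_iff₀ (by positivity) (by positivity)]
  nlinarith [h3, pow_pos (show (0:ℝ) < 2 by norm_num) (2*k+m)]

noncomputable def hfun (m j k : ℕ) : ℝ :=
  Real.sqrt (k+1) * ((2*k+m).choose (k+1+j) : ℝ) / 2^(2*k+m)

lemma ratio_tendsto (c a b : ℝ) (hc : 0 < c) :
    Tendsto (fun k : ℕ => (c*(k:ℝ)+a)/(c*(k:ℝ)+b)) atTop (nhds 1) := by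
  have hden : Tendsto (fun k : ℕ => c*(k:ℝ)+b) atTop atTop :=
    tendsto_atTop_add_const_right _ b
      ((tendsto_const_mul_atTop_of_pos hc).mpr tendsto_natCast_atTop_atTop)
  have h0 : Tendsto (fun k : ℕ => (a-b)/(c*(k:ℝ)+b)) atTop (nhds 0) :=
    Tendsto.div_atTop tendsto_const_nhds hden
  have h1 : Tendsto (fun k : ℕ => 1 + (a-b)/(c*(k:ℝ)+b)) atTop (nhds (1+0)) :=
    tendsto_const_nhds.add h0
  rw [add_zero] at h1
  apply h1.congr'
  filter_upwards [hden.eventually_gt_atTop 0] with k hk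
  field_simp
  ring

lemma hfun_base : Tendsto (hfun 1 0) atTop (nhds (1 / Real.sqrt π)) := by
  have h := cb_tendsto.comp (tendsto_add_atTop_nat 1)
  apply h.congr
  intro k
  simp only [Function.comp]
  unfold hfun
  have hsym := Nat.choose_symm (show k+1 ≤ 2*k+1 by omega)
  rw [show 2*k+1-(k+1) = k from by omega] at hsym
  have hval : ((2*k+1).choose (k+1+0) : ℝ) = (Nat.centralBinom (k+1) : ℝ)/2 := by
    have h' := congrArg (fun x : ℕ => (x:ℝ)) (two_choose_eq_cb k)
    push_cast at h'
    rw [show k+1+0 = k+1 from rfl, ← hsym]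
    linarith
  rw [hval]
  push_cast
  rw [show (4:ℝ)^(k+1) = 2^(2*k+1) * 2 from by
    rw [show (4:ℝ) = 2^2 from by norm_num, ← pow_mul, show 2*(k+1) = (2*k+1)+1 from by ring,
      pow_succ]]
  ring

lemma hfun_jstep (m j : ℕ) (hm : 1 ≤ m)
    (ih : Tendsto (hfun m j) atTop (nhds (1 / Real.sqrt π))) :
    Tendsto (hfun m (j+1)) atTop (nhds (1 / Real.sqrt π)) := by
  have hr := ratio_tendsto 1 ((m:ℝ)-j-1) ((j:ℝ)+2) one_pos
  have h := ih.mul hr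
  rw [mul_one] at h
  apply h.congr'
  filter_upwards [eventually_ge_atTop (j+2)] with k hk
  unfold hfun
  have hle : k+1+j ≤ 2*k+m := by omega
  have hcse := Nat.choose_succ_right_eq (2*k+m) (k+1+j)
  have hsub : 2*k+m - (k+1+j) = k+m-j-1 := by omega
  rw [hsub] at hcse
  have hcast := congrArg (fun x : ℕ => (x:ℝ)) hcse
  push_cast [show j ≤ k+m from by omega, show 1 ≤ k+m-j from by omega] at hcast
  have hd1 : ((k:ℝ)+1+j+1) ≠ 0 := by positivity
  have hd2 : (0:ℝ) < 2^(2*k+m) := by positivity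
  have hgoal : ((2*k+m).choose (k+1+(j+1)) : ℝ)
      = ((2*k+m).choose (k+1+j) : ℝ) * ((k:ℝ)+m-j-1) / ((k:ℝ)+1+j+1) := by
    rw [show k+1+(j+1) = (k+1+j)+1 from by ring]
    rw [eq_div_iff hd1]
    push_cast
    linarith [hcast]
  rw [hgoal]
  have hm1 : (1:ℝ)*(k:ℝ)+((m:ℝ)-j-1) = (k:ℝ)+m-j-1 := by ring
  have hm2 : (1:ℝ)*(k:ℝ)+((j:ℝ)+2) = (k:ℝ)+1+j+1 := by ring
  rw [hm1, hm2]
  field_simp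

lemma hfun_mstep (m j : ℕ) (hm : 1 ≤ m)
    (ih : Tendsto (hfun m j) atTop (nhds (1 / Real.sqrt π))) :
    Tendsto (hfun (m+1) j) atTop (nhds (1 / Real.sqrt π)) := by
  have hr := ratio_tendsto 2 ((m:ℝ)+1) (2*(m:ℝ)-2*j) two_pos
  have h := ih.mul hr
  rw [mul_one] at h
  apply h.congr'
  filter_upwards [eventually_ge_atTop (j+2)] with k hk
  unfold hfun
  have hle : k+1+j ≤ 2*k+m+1 := by omega
  have hcse := Nat.choose_mul_succ_eq (2*k+m) (k+1+j)
  have hsub : 2*k+m+1 - (k+1+j) = k+m-j := by omega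
  rw [hsub] at hcse
  have hcast := congrArg (fun x : ℕ => (x:ℝ)) hcse
  push_cast [show j ≤ k+m from by omega] at hcast
  have hd1 : ((k:ℝ)+m-j) ≠ 0 := by
    have : (j:ℝ) < (k:ℝ) + m := by
      have : (j:ℕ) < k + m := by omega
      exact_mod_cast this
    linarith
  have hgoal : ((2*k+(m+1)).choose (k+1+j) : ℝ)
      = ((2*k+m).choose (k+1+j) : ℝ) * (2*(k:ℝ)+m+1) / ((k:ℝ)+m-j) := by
    rw [show 2*k+(m+1) = (2*k+m)+1 from by ring]
    rw [eq_div_iff hd1]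
    push_cast
    linarith [hcast]
  rw [hgoal]
  rw [show 2^(2*k+(m+1)) = (2:ℝ)^(2*k+m) * 2 from by
    rw [show 2*k+(m+1) = (2*k+m)+1 from by ring, pow_succ]]
  have hm1 : (2:ℝ)*(k:ℝ)+((m:ℝ)+1) = 2*(k:ℝ)+m+1 := by ring
  rw [hm1]
  have hd2 : (0:ℝ) < 2^(2*k+m) := by positivity
  have hd3 : (2:ℝ)*(k:ℝ)+(2*(m:ℝ)-2*j) ≠ 0 := by
    have : (j:ℝ) < (k:ℝ) + m := by
      have : (j:ℕ) < k + m := by omega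
      exact_mod_cast this
    linarith
  field_simp
  ring_nf
  field_simp

lemma hfun_all : ∀ m, 1 ≤ m → ∀ j, Tendsto (hfun m j) atTop (nhds (1 / Real.sqrt π)) := by
  intro m
  induction m with
  | zero => omega
  | succ m ih =>
    intro _ j
    rcases Nat.eq_zero_or_pos m with h0 | h1
    · subst h0
      induction j with
      | zero => exact hfun_base
      | succ j ihj => exact hfun_jstep 1 j le_rfl ihj
    · exact hfun_mstep m j h1 (ih h1 j)

lemma Ttail_tendsto (m : ℕ) (hm : 1 ≤ m) :
    Tendsto (fun k : ℕ => Real.sqrt (k+1) * Ttail k m) atTop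
      (nhds ((m:ℝ) / Real.sqrt π)) := by
  have h := tendsto_finset_sum (Finset.range m)
    (fun j _ => hfun_all m hm j)
  have hsum : (∑ _j ∈ Finset.range m, 1 / Real.sqrt π) = (m:ℝ)/Real.sqrt π := by
    rw [Finset.sum_const, Finset.card_range]
    simp [div_eq_mul_inv]
  rw [hsum] at h
  apply h.congr
  intro k
  unfold hfun Ttail
  rw [Nat.cast_sum]
  rw [Finset.sum_div, Finset.mul_sum]
  apply Finset.sum_congr rfl
  intro j _
  rw [mul_div_assoc]

/-- For every fixed `m ≥ 1`: `π^{(1)}_{(i;m)} = 1 - C_m/√i + o(1/√i)` for some constant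
`C_m > 0`; in particular `π^{(1)}_{(i;m)} → 1`, and the tail `1 - π^{(1)}_{(i;m)}` is at most
`m·i^{-1/2}` and at least a positive constant times `i^{-1/2}`. -/
theorem piOne_asymptotics (m : ℕ) (hm : 1 ≤ m) :
    ∃ C : ℝ, 0 < C ∧
      (fun i : ℕ => piOne i m - (1 - C / Real.sqrt i)) =o[atTop] (fun i : ℕ => 1 / Real.sqrt i) ∧
      Tendsto (fun i : ℕ => piOne i m) atTop (nhds 1) ∧
      (∀ i : ℕ, 1 ≤ i → 1 - piOne i m ≤ (m : ℝ) / Real.sqrt i) ∧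
      (∃ c : ℝ, 0 < c ∧ ∀ i : ℕ, 1 ≤ i → c / Real.sqrt i ≤ 1 - piOne i m) := by
  have hm' : (0:ℝ) < m := by exact_mod_cast hm
  refine ⟨(m:ℝ) / Real.sqrt π, by positivity, ?_, ?_, ?_, ?_⟩
  · -- littleO
    have hT : Tendsto (fun i : ℕ => Real.sqrt i * Ttail (i-1) m) atTop
        (nhds ((m:ℝ)/Real.sqrt π)) := by
      have h := (Ttail_tendsto m hm).comp (tendsto_sub_atTop_nat 1)
      apply h.congr'
      filter_upwards [eventually_ge_atTop 1] with i hi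
      simp only [Function.comp]
      congr 2
      push_cast [hi]
      ring
    rw [Asymptotics.isLittleO_iff_tendsto']
    · have h2 : Tendsto (fun i : ℕ => (m:ℝ)/Real.sqrt π - Real.sqrt i * Ttail (i-1) m)
          atTop (nhds ((m:ℝ)/Real.sqrt π - (m:ℝ)/Real.sqrt π)) :=
        tendsto_const_nhds.sub hT
      rw [sub_self] at h2
      apply h2.congr'
      filter_upwards [eventually_ge_atTop 1] with i hi
      obtain ⟨k, rfl⟩ : ∃ k, i = k+1 := ⟨i-1, by omega⟩
      have hs : (0:ℝ) < Real.sqrt (k+1:ℕ) := Real.sqrt_pos.mpr (by positivity)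
      rw [piOne_eq m hm k]
      rw [show (k+1)-1 = k from rfl]
      field_simp
      ring
    · filter_upwards [eventually_ge_atTop 1] with i hi h0
      exfalso
      have hs : (0:ℝ) < Real.sqrt (i:ℕ) := Real.sqrt_pos.mpr (by
        have : (0:ℕ) < i := hi
        exact_mod_cast this)
      rw [one_div] at h0
      exact (inv_ne_zero hs.ne') h0
  · -- tendsto 1
    have hinv : Tendsto (fun i : ℕ => 1/Real.sqrt i) atTop (nhds 0) := by
      rw [show (fun i : ℕ => 1/Real.sqrt i) = fun i : ℕ => (Real.sqrt i)⁻¹ from by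
        funext i; rw [one_div]]
      refine tendsto_inv_atTop_zero.comp (tendsto_atTop_atTop_of_monotone ?_ ?_)
      · intro a b hab
        exact Real.sqrt_le_sqrt (by exact_mod_cast hab)
      · intro b
        refine ⟨(⌈b⌉₊+1)^2, ?_⟩
        rw [show (((⌈b⌉₊+1)^2 : ℕ) : ℝ) = ((⌈b⌉₊+1 : ℕ):ℝ)^2 from by push_cast; ring,
          Real.sqrt_sq (by positivity)]
        calc b ≤ ⌈b⌉₊ := Nat.le_ceil b
          _ ≤ ((⌈b⌉₊+1 : ℕ):ℝ) := by push_cast; linarith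
    have hT : Tendsto (fun i : ℕ => Real.sqrt i * Ttail (i-1) m) atTop
        (nhds ((m:ℝ)/Real.sqrt π)) := by
      have h := (Ttail_tendsto m hm).comp (tendsto_sub_atTop_nat 1)
      apply h.congr'
      filter_upwards [eventually_ge_atTop 1] with i hi
      simp only [Function.comp]
      congr 2
      push_cast [hi]
      ring
    have h0 : Tendsto (fun i : ℕ => Ttail (i-1) m) atTop (nhds 0) := by
      have h := hT.mul hinv
      rw [mul_zero] at h
      apply h.congr'
      filter_upwards [eventually_ge_atTop 1] with i hi
      have hs : (0:ℝ) < Real.sqrt (i:ℕ) := Real.sqrt_pos.mpr (by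
        have : (0:ℕ) < i := hi
        exact_mod_cast this)
      field_simp
    have h1 : Tendsto (fun i : ℕ => 1 - Ttail (i-1) m) atTop (nhds (1-0)) :=
      tendsto_const_nhds.sub h0
    rw [sub_zero] at h1
    apply h1.congr'
    filter_upwards [eventually_ge_atTop 1] with i hi
    obtain ⟨k, rfl⟩ : ∃ k, i = k+1 := ⟨i-1, by omega⟩
    rw [show (k+1)-1 = k from rfl, piOne_eq m hm k]
  · -- upper bound
    intro i hi
    obtain ⟨k, rfl⟩ : ∃ k, i = k+1 := ⟨i-1, by omega⟩
    rw [piOne_eq m hm k]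
    have h1 := Ttail_le k m hm
    have h2 := cb_upper (k+1)
    have hs1 : (0:ℝ) < Real.sqrt ((k:ℝ)+1) := Real.sqrt_pos.mpr (by positivity)
    have hs2 : (0:ℝ) < Real.sqrt ((k:ℝ)+1+1) := Real.sqrt_pos.mpr (by positivity)
    have h3 : (m:ℝ) * (Nat.centralBinom (k+1) : ℝ) / 4^(k+1) ≤ (m:ℝ) / Real.sqrt ((k:ℝ)+1+1) := by
      rw [mul_div_assoc]
      calc (m:ℝ) * ((Nat.centralBinom (k+1) : ℝ) / 4^(k+1))
          ≤ (m:ℝ) * (1 / Real.sqrt (((k+1):ℕ)+1)) :=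
            mul_le_mul_of_nonneg_left h2 (le_of_lt hm')
        _ = (m:ℝ) / Real.sqrt ((k:ℝ)+1+1) := by push_cast; rw [mul_one_div]
    have h4 : (m:ℝ) / Real.sqrt ((k:ℝ)+1+1) ≤ (m:ℝ) / Real.sqrt ((k:ℝ)+1) := by
      apply div_le_div_of_nonneg_left (le_of_lt hm') hs1
      exact Real.sqrt_le_sqrt (by linarith)
    have : (1:ℝ) - (1 - Ttail k m) = Ttail k m := by ring
    rw [this]
    push_cast
    linarith [h1, h3, h4]
  · -- lower bound
    refine ⟨(1/2:ℝ)^(m+1), by positivity, ?_⟩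
    intro i hi
    obtain ⟨k, rfl⟩ : ∃ k, i = k+1 := ⟨i-1, by omega⟩
    rw [piOne_eq m hm k]
    have : (1:ℝ) - (1 - Ttail k m) = Ttail k m := by ring
    rw [this]
    have hs1 : (0:ℝ) < Real.sqrt ((k:ℝ)+1) := Real.sqrt_pos.mpr (by positivity)
    have hp2 : (0:ℝ) < (2:ℝ)^m := by positivity
    rcases Nat.eq_zero_or_pos k with h0 | h1
    · subst h0
      have hge := Ttail_ge 0 m hm
      simp only [Nat.centralBinom_zero] at hge
      have h5 : ((1:ℕ):ℝ)/4^0/2^m = 1/2^m := by norm_num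
      rw [h5] at hge
      push_cast
      rw [Real.sqrt_one, div_one]
      have hle : (1/2:ℝ)^(m+1) ≤ 1/2^m := by
        rw [div_pow, one_pow, pow_succ]
        rw [div_le_div_iff₀ (by positivity) hp2]
        nlinarith [hp2]
      linarith
    · have hge := Ttail_ge k m hm
      have hcb := cb_lower k h1
      have hsk : (0:ℝ) < Real.sqrt (k:ℝ) := Real.sqrt_pos.mpr (by exact_mod_cast h1)
      have h6 : (1/2:ℝ)^(m+1) / Real.sqrt ((k:ℝ)+1) ≤ (1/2:ℝ)^(m+1) / Real.sqrt (k:ℝ) := by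
        apply div_le_div_of_nonneg_left (by positivity) hsk
        exact Real.sqrt_le_sqrt (by linarith)
      have h7 : (1/2:ℝ)^(m+1) / Real.sqrt (k:ℝ) = (1/(2*Real.sqrt (k:ℝ)))/2^m := by
        rw [div_pow, one_pow, pow_succ]
        field_simp
      have h8 : (1/(2*Real.sqrt (k:ℝ)))/2^m ≤ (Nat.centralBinom k : ℝ)/4^k/2^m :=
        div_le_div_of_nonneg_right hcb hp2.le
      push_cast
      calc (1/2:ℝ)^(m+1) / Real.sqrt ((k:ℝ)+1)
          ≤ (1/2:ℝ)^(m+1) / Real.sqrt (k:ℝ) := h6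
        _ = (1/(2*Real.sqrt (k:ℝ)))/2^m := h7
        _ ≤ (Nat.centralBinom k : ℝ)/4^k/2^m := h8
        _ ≤ Ttail k m := hge
end

section
/- Let P₀ and P be stochastic matrices on a finite state space with P = P₀ + ε ΔP, where P is ergodic (irreducible aperiodic) with stationary measure π, and π₀ is a stationary measure of P₀. If D = Σ_{j≥0} ΔP · P₀^j converges and the series Σ_{k≥0} ε^k π₀ D^k converges absolutely, then π = Σ_{k=0}^{∞} ε^k π^{(k)} where π^{(k)} = π₀ D^k. -/
open Matrix

section Aux

variable {X : Type*} [Fintype X] [DecidableEq X]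

private lemma vecMul_apply' (v : X → ℝ) (M : Matrix X X ℝ) (j : X) :
    (v ᵥ* M) j = ∑ i, v i * M i j := by
  simp [Matrix.vecMul, dotProduct]

private lemma sum_vecMul' (v : X → ℝ) (M : Matrix X X ℝ) :
    ∑ j, (v ᵥ* M) j = ∑ i, v i * (∑ j, M i j) := by
  simp only [vecMul_apply']
  rw [Finset.sum_comm]
  exact Finset.sum_congr rfl fun i _ => (Finset.mul_sum _ _ _).symm

private lemma vecMul_smulMat (v : X → ℝ) (c : ℝ) (M : Matrix X X ℝ) :
    v ᵥ* (c • M) = c • (v ᵥ* M) := by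
  ext j
  simp only [vecMul_apply', Matrix.smul_apply, smul_eq_mul, Pi.smul_apply]
  rw [Finset.mul_sum]
  exact Finset.sum_congr rfl fun i _ => by ring

private lemma rowsum_pow {P : Matrix X X ℝ} (h : ∀ i, ∑ j, P i j = 1) :
    ∀ (n : ℕ) (i : X), ∑ j, (P ^ n) i j = 1 := by
  intro n
  induction n with
  | zero => intro i; simp [Matrix.one_apply]
  | succ n ih =>
    intro i
    rw [pow_succ]
    simp only [Matrix.mul_apply]
    rw [Finset.sum_comm]
    calc ∑ l, ∑ j, (P ^ n) i l * P l j
        = ∑ l, (P ^ n) i l * ∑ j, P l j :=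
          Finset.sum_congr rfl fun l _ => (Finset.mul_sum _ _ _).symm
      _ = 1 := by simp only [h, mul_one]; exact ih i

/-- Uniqueness: a signed vector summing to 0 fixed by a strictly positive stochastic
matrix is zero. -/
private lemma unique_fixed [Nonempty X] (Q : Matrix X X ℝ)
    (hpos : ∀ i j, 0 < Q i j) (hrow : ∀ i, ∑ j, Q i j = 1)
    (v : X → ℝ) (hv : v ᵥ* Q = v) (hsum : ∑ i, v i = 0) : v = 0 := by
  by_contra hne
  have hexa : ∃ a, 0 < v a := by
    by_contra h
    push_neg at h
    have h0 := (Finset.sum_eq_zero_iff_of_nonpos (fun i _ => h i)).1 hsum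
    exact hne (funext fun i => h0 i (Finset.mem_univ i))
  have hexb : ∃ b, v b < 0 := by
    by_contra h
    push_neg at h
    have h0 := (Finset.sum_eq_zero_iff_of_nonneg (fun i _ => h i)).1 hsum
    exact hne (funext fun i => h0 i (Finset.mem_univ i))
  obtain ⟨a, ha⟩ := hexa
  obtain ⟨b, hb⟩ := hexb
  have key : ∀ i, |v i| < ∑ j, |v j| * Q j i := by
    intro i
    have hvi : v i = ∑ j, v j * Q j i := by
      conv_lhs => rw [← hv]
      exact vecMul_apply' v Q i
    set s := Finset.univ.filter (fun j => 0 ≤ v j) with hs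
    have hmems : ∀ j, j ∈ s ↔ 0 ≤ v j := by
      intro j; simp [hs]
    have hmemc : ∀ j, j ∈ sᶜ ↔ v j < 0 := by
      intro j; simp [hs, Finset.mem_compl, not_le]
    set A := ∑ j ∈ s, v j * Q j i with hA
    set B := ∑ j ∈ sᶜ, v j * Q j i with hB
    have hApos : 0 < A := by
      refine Finset.sum_pos' (fun j hj => ?_) ⟨a, (hmems a).2 ha.le, ?_⟩
      · exact mul_nonneg ((hmems j).1 hj) (hpos j i).le
      · exact mul_pos ha (hpos a i)
    have hBneg : B < 0 := by
      have : 0 < ∑ j ∈ sᶜ, -(v j * Q j i) := by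
        refine Finset.sum_pos' (fun j hj => ?_) ⟨b, (hmemc b).2 hb, ?_⟩
        · have := (hmemc j).1 hj
          nlinarith [(hpos j i).le, this.le]
        · nlinarith [hpos b i]
      rw [Finset.sum_neg_distrib] at this
      linarith
    have hsplit : ∑ j, v j * Q j i = A + B := (Finset.sum_add_sum_compl s _).symm
    have habs : ∑ j, |v j| * Q j i = A - B := by
      rw [← Finset.sum_add_sum_compl s (fun j => |v j| * Q j i)]
      have e1 : ∑ j ∈ s, |v j| * Q j i = A := by
        refine Finset.sum_congr rfl fun j hj => ?_
        rw [abs_of_nonneg ((hmems j).1 hj)]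
      have e2 : ∑ j ∈ sᶜ, |v j| * Q j i = -B := by
        rw [hB, ← Finset.sum_neg_distrib]
        refine Finset.sum_congr rfl fun j hj => ?_
        rw [abs_of_neg ((hmemc j).1 hj)]; ring
      rw [e1, e2]; ring
    rw [hvi, hsplit, habs]
    rw [abs_lt]
    constructor <;> linarith
  have hcontr : ∑ i, |v i| < ∑ j, |v j| := by
    calc ∑ i, |v i| < ∑ i, ∑ j, |v j| * Q j i :=
          Finset.sum_lt_sum_of_nonempty Finset.univ_nonempty (fun i _ => key i)
      _ = ∑ j, |v j| * ∑ i, Q j i := by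
          rw [Finset.sum_comm]
          exact Finset.sum_congr rfl fun j _ => (Finset.mul_sum _ _ _).symm
      _ = ∑ j, |v j| := by simp only [hrow, mul_one]
  exact lt_irrefl _ hcontr

private lemma lmap_tsum {E F : Type*} [AddCommGroup E] [Module ℝ E] [TopologicalSpace E]
    [IsTopologicalAddGroup E] [ContinuousSMul ℝ E] [T2Space E] [FiniteDimensional ℝ E]
    [AddCommGroup F] [Module ℝ F] [TopologicalSpace F] [IsTopologicalAddGroup F]
    [ContinuousSMul ℝ F] [T2Space F]
    (f : E →ₗ[ℝ] F) {g : ℕ → E} (hg : Summable g) :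
    f (∑' n, g n) = ∑' n, f (g n) :=
  (LinearMap.toContinuousLinearMap f).map_tsum hg

private lemma lmap_summable {E F : Type*} [AddCommGroup E] [Module ℝ E] [TopologicalSpace E]
    [IsTopologicalAddGroup E] [ContinuousSMul ℝ E] [T2Space E] [FiniteDimensional ℝ E]
    [AddCommGroup F] [Module ℝ F] [TopologicalSpace F] [IsTopologicalAddGroup F]
    [ContinuousSMul ℝ F] [T2Space F]
    (f : E →ₗ[ℝ] F) {g : ℕ → E} (hg : Summable g) :
    Summable (fun n => f (g n)) :=
  hg.map f.toAddMonoidHom f.continuous_of_finiteDimensional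

private def rowSumLM (i : X) : Matrix X X ℝ →ₗ[ℝ] ℝ where
  toFun M := ∑ j, M i j
  map_add' A B := by simp [Matrix.add_apply, Finset.sum_add_distrib]
  map_smul' c A := by simp [Matrix.smul_apply, Finset.mul_sum]

private lemma rowSumLM_apply (i : X) (M : Matrix X X ℝ) : rowSumLM i M = ∑ j, M i j := rfl

private def sumLM : (X → ℝ) →ₗ[ℝ] ℝ where
  toFun v := ∑ i, v i
  map_add' a b := by simp [Finset.sum_add_distrib]
  map_smul' c a := by simp [Finset.mul_sum]

private lemma sumLM_apply (v : X → ℝ) : sumLM v = ∑ i, v i := rfl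

private def vecMulLM (M : Matrix X X ℝ) : (X → ℝ) →ₗ[ℝ] (X → ℝ) where
  toFun v := v ᵥ* M
  map_add' a b := Matrix.add_vecMul M a b
  map_smul' c a := Matrix.smul_vecMul c a M

private lemma vecMulLM_apply (M : Matrix X X ℝ) (v : X → ℝ) : vecMulLM M v = v ᵥ* M := rfl

end Aux

/-- Perturbation expansion of the stationary measure: if `P = P₀ + ε ΔP` is ergodic with
stationary measure `π`, `π₀` is stationary for `P₀`, `D = ∑_{j≥0} ΔP P₀^j` converges and the
series `∑_k ε^k π₀ D^k` converges absolutely, then `π = ∑_{k≥0} ε^k π₀ D^k`. -/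
theorem perturbation_expansion_stationary_measure
    {X : Type*} [Fintype X] [DecidableEq X] [Nonempty X]
    (P₀ P ΔP : Matrix X X ℝ) (ε : ℝ)
    (hP₀nonneg : ∀ i j, 0 ≤ P₀ i j) (hP₀row : ∀ i, ∑ j, P₀ i j = 1)
    (hPnonneg : ∀ i j, 0 ≤ P i j) (hProw : ∀ i, ∑ j, P i j = 1)
    (hpert : P = P₀ + ε • ΔP)
    (hergodic : ∃ N : ℕ, ∀ i j, 0 < (P ^ N) i j)
    (π π₀ : X → ℝ)
    (hπnonneg : ∀ i, 0 ≤ π i) (hπsum : ∑ i, π i = 1)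
    (hπstat : Matrix.vecMul π P = π)
    (hπ₀nonneg : ∀ i, 0 ≤ π₀ i) (hπ₀sum : ∑ i, π₀ i = 1)
    (hπ₀stat : Matrix.vecMul π₀ P₀ = π₀)
    (hD : Summable (fun j : ℕ => ΔP * P₀ ^ j))
    (habs : Summable (fun k : ℕ =>
      |ε| ^ k * ‖Matrix.vecMul π₀ ((∑' j : ℕ, ΔP * P₀ ^ j) ^ k)‖)) :
    π = ∑' k : ℕ, ε ^ k • Matrix.vecMul π₀ ((∑' j : ℕ, ΔP * P₀ ^ j) ^ k) := by
  obtain ⟨N, hN⟩ := hergodic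
  set D : Matrix X X ℝ := ∑' j : ℕ, ΔP * P₀ ^ j with hDdef
  set t : ℕ → X → ℝ := fun k => ε ^ k • Matrix.vecMul π₀ (D ^ k) with htdef
  set E : Matrix X X ℝ := ε • D with hEdef
  -- basic facts about t
  have ht0 : t 0 = π₀ := by
    simp [htdef, Matrix.vecMul_one]
  have ht_sum : Summable t := by
    apply Summable.of_norm
    refine habs.congr fun k => ?_
    rw [htdef]
    simp only [norm_smul, Real.norm_eq_abs, abs_pow]
  have htE : ∀ k, t k = π₀ ᵥ* E ^ k := by
    intro k
    rw [htdef, hEdef]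
    simp only []
    rw [smul_pow, vecMul_smulMat]
  -- recursion for D and E
  have hDrec : D = ΔP + D * P₀ := by
    have h2 : ∀ j : ℕ, ΔP * P₀ ^ (j + 1) = (LinearMap.mulRight ℝ P₀) (ΔP * P₀ ^ j) := fun j => by
      rw [LinearMap.mulRight_apply, pow_succ, Matrix.mul_assoc]
    calc D = ΔP * P₀ ^ 0 + ∑' j, ΔP * P₀ ^ (j + 1) := Summable.tsum_eq_zero_add hD
      _ = ΔP + ∑' j, (LinearMap.mulRight ℝ P₀) (ΔP * P₀ ^ j) := by
          rw [pow_zero, mul_one]; exact congrArg _ (tsum_congr h2)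
      _ = ΔP + D * P₀ := by rw [← lmap_tsum _ hD, LinearMap.mulRight_apply]
  have hErec : E = ε • ΔP + E * P₀ := by
    rw [hEdef]
    conv_lhs => rw [hDrec]
    rw [smul_add, Matrix.smul_mul]
  -- row sums
  have hterm : ∀ (i : X) (k : ℕ), rowSumLM i (ΔP * P₀ ^ k) = ∑ l, ΔP i l := by
    intro i k
    rw [rowSumLM_apply]
    simp only [Matrix.mul_apply]
    rw [Finset.sum_comm]
    calc ∑ l, ∑ j, ΔP i l * (P₀ ^ k) l j
        = ∑ l, ΔP i l * ∑ j, (P₀ ^ k) l j :=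
          Finset.sum_congr rfl fun l _ => (Finset.mul_sum _ _ _).symm
      _ = ∑ l, ΔP i l := by simp only [rowsum_pow hP₀row, mul_one]
  have hΔProw : ∀ i, ∑ l, ΔP i l = 0 := by
    intro i
    have hsm : Summable (fun k : ℕ => rowSumLM i (ΔP * P₀ ^ k)) := lmap_summable _ hD
    exact (summable_const_iff _).1 (hsm.congr (hterm i))
  have hDrow : ∀ i, ∑ j, D i j = 0 := by
    intro i
    have h1 : rowSumLM i D = ∑' k, rowSumLM i (ΔP * P₀ ^ k) := by
      rw [hDdef]; exact lmap_tsum _ hD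
    rw [rowSumLM_apply] at h1
    rw [h1]
    calc ∑' k, rowSumLM i (ΔP * P₀ ^ k) = ∑' (_ : ℕ), (0 : ℝ) :=
          tsum_congr fun k => by rw [hterm i k, hΔProw i]
      _ = 0 := tsum_zero
  have hErow : ∀ i, ∑ j, E i j = 0 := by
    intro i
    rw [hEdef]
    simp only [Matrix.smul_apply, smul_eq_mul]
    rw [← Finset.mul_sum, hDrow i, mul_zero]
  -- auxiliary sequences
  set u : ℕ → X → ℝ := fun k => (t k) ᵥ* P₀ with hudef
  set w : ℕ → X → ℝ := fun k => (t k) ᵥ* (ε • ΔP) with hwdef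
  have hu_sum : Summable u := lmap_summable (vecMulLM P₀) ht_sum
  have hw_sum : Summable w := lmap_summable (vecMulLM (ε • ΔP)) ht_sum
  have htshift : ∀ k, t (k + 1) = (t k) ᵥ* E := by
    intro k
    rw [htE, htE, Matrix.vecMul_vecMul, ← pow_succ]
  have htrec : ∀ k, t (k + 1) = w k + u (k + 1) := by
    intro k
    have h1 : t (k + 1) = (t k) ᵥ* (ε • ΔP) + ((t k) ᵥ* E) ᵥ* P₀ := by
      rw [htshift k]
      conv_lhs => rw [hErec]
      rw [Matrix.vecMul_add, Matrix.vecMul_vecMul]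
    rw [h1, ← htshift k]
  -- S is a fixed point of P
  have hSP : (∑' k, t k) ᵥ* P = ∑' k, (t k) ᵥ* P := lmap_tsum (vecMulLM P) ht_sum
  have hterm' : ∀ k, (t k) ᵥ* P = u k + w k := fun k => by
    rw [hpert, Matrix.vecMul_add]
  have hshift_u : Summable (fun k => u (k + 1)) := (summable_nat_add_iff 1).2 hu_sum
  have hS : (∑' k, t k) ᵥ* P = ∑' k, t k := by
    rw [hSP]
    calc ∑' k, (t k) ᵥ* P = ∑' k, (u k + w k) := tsum_congr hterm'
      _ = (∑' k, u k) + ∑' k, w k := Summable.tsum_add hu_sum hw_sum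
      _ = (u 0 + ∑' k, u (k + 1)) + ∑' k, w k := by rw [← Summable.tsum_eq_zero_add hu_sum]
      _ = u 0 + ((∑' k, u (k + 1)) + ∑' k, w k) := add_assoc _ _ _
      _ = u 0 + ∑' k, (u (k + 1) + w k) := by rw [Summable.tsum_add hshift_u hw_sum]
      _ = u 0 + ∑' k, t (k + 1) := by
          refine congrArg _ (tsum_congr fun k => ?_)
          rw [htrec k, add_comm]
      _ = t 0 + ∑' k, t (k + 1) := by
          congr 1
          show (t 0) ᵥ* P₀ = t 0
          rw [ht0]; exact hπ₀stat
      _ = ∑' k, t k := (Summable.tsum_eq_zero_add ht_sum).symm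
  -- sum of entries of S is 1
  have hsumt : ∀ k, sumLM (t k) = if k = 0 then 1 else 0 := by
    intro k
    cases k with
    | zero => simp only [if_pos rfl, sumLM_apply, ht0]; exact hπ₀sum
    | succ m =>
      simp only [Nat.succ_ne_zero, if_false]
      rw [sumLM_apply, htshift m, sum_vecMul']
      simp only [hErow, mul_zero, Finset.sum_const_zero]
  have hSsum : ∑ i, (∑' k, t k) i = 1 := by
    have h1 : sumLM (∑' k, t k) = ∑' k, sumLM (t k) := lmap_tsum _ ht_sum
    rw [sumLM_apply] at h1
    rw [h1, tsum_eq_single 0 (fun b hb => by rw [hsumt b, if_neg hb])]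
    rw [hsumt 0, if_pos rfl]
  -- uniqueness
  have hvfix : ∀ n, (π - ∑' k, t k) ᵥ* P ^ n = π - ∑' k, t k := by
    intro n
    induction n with
    | zero => rw [pow_zero, Matrix.vecMul_one]
    | succ n ih => rw [pow_succ, ← Matrix.vecMul_vecMul, ih, Matrix.sub_vecMul, hπstat, hS]
  have hvsum : ∑ i, (π - ∑' k, t k) i = 0 := by
    simp only [Pi.sub_apply]
    rw [Finset.sum_sub_distrib, hπsum, hSsum, sub_self]
  have hzero := unique_fixed (P ^ N) hN (rowsum_pow hProw N) _ (hvfix N) hvsum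
  exact sub_eq_zero.1 hzero
end
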